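/- arXiv:1710.04643 — 3 statements merged into one kernel-verified Lean document; each statement's English description precedes it below -/
import Mathlib

section
/- (Leftover hash lemma for concatenated hash functions) With the setup above, for any value z of a correlated random variable Z, the variational distance between the joint distribution of (F_L(X_L), F_L) given Z=z and the product of uniform distributions satisfies V(p_{F_L(X_L),F_L | Z=z}, p_U ⊗ p_{U_𝓕}) ≤ sqrt( Σ_{∅≠S⊆L} 2^{r_S − H_∞(X_S | Z=z)} ). -/
noncomputable section
open Finset
open scoped Classical BigOperators

/-- `p` is a probability mass function. -/
def IsPMF {Ω : Type} [Fintype Ω] (p : Ω → ℝ) : Prop :=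
  (∀ ω, 0 ≤ p ω) ∧ (∑ ω : Ω, p ω) = 1

/-- Marginal pmf of `q` over the coordinates in `T`. -/
def marg {L : Type} [Fintype L] [DecidableEq L] {𝒳 : L → Type} [∀ l, Fintype (𝒳 l)]
    (q : (∀ l, 𝒳 l) → ℝ) (T : Finset L) (a : ∀ i : T, 𝒳 i.1) : ℝ :=
  ∑ x : ∀ l, 𝒳 l, if (∀ i : T, x i.1 = a i) then q x else 0

/-- Min-entropy (base 2) of the marginal of `q` on the coordinates in `T`:
`H_∞(X_T) = -log₂ max_a P[X_T = a]`. -/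
def minEnt {L : Type} [Fintype L] [DecidableEq L] {𝒳 : L → Type} [∀ l, Fintype (𝒳 l)]
    (q : (∀ l, 𝒳 l) → ℝ) (T : Finset L) : ℝ :=
  - Real.logb 2 (⨆ a : ∀ i : T, 𝒳 i.1, marg q T a)

/-- The family `(f l i)_{i : ι l}` is a two-universal family of hash functions into
`{0,1}^{r l}`, under the uniform choice of the index. -/
def TwoUniversal {L : Type} {𝒳 ι : L → Type} [∀ l, Fintype (ι l)]
    (r : L → ℕ) (f : ∀ l, ι l → 𝒳 l → (Fin (r l) → Bool)) : Prop :=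
  ∀ l, ∀ x x' : 𝒳 l, x ≠ x' →
    ((Finset.univ.filter (fun i : ι l => f l i x = f l i x')).card : ℝ)
        / (Fintype.card (ι l) : ℝ)
      ≤ ((2 : ℝ) ^ (r l))⁻¹

private lemma sum_ite_pair {β : Type*} [Fintype β] [DecidableEq β] (a b : β) (u v : ℝ) :
    ∑ k : β, (if a = k then u else 0) * (if b = k then v else 0)
      = if a = b then u * v else 0 := by
  by_cases h : a = b
  · subst h; simp [ite_mul, Finset.sum_ite_eq]
  · rw [if_neg h]
    refine Finset.sum_eq_zero fun k _ => ?_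
    by_cases h1 : a = k <;> by_cases h2 : b = k <;> simp_all

private lemma sum_rot3 {α β γ : Type*} [Fintype α] [Fintype β] [Fintype γ]
    (F : α → β → γ → ℝ) :
    ∑ a : α, ∑ b : β, ∑ c : γ, F a b c = ∑ b : β, ∑ c : γ, ∑ a : α, F a b c := by
  rw [Finset.sum_comm]
  exact Finset.sum_congr rfl fun b _ => Finset.sum_comm

/-- leftover hash lemma for concatenated hash functions, conditioned on
`Z = z`: the variational distance of `(F_L(X_L), F_L)` given `Z = z` from uniform is at
most `sqrt(Σ_{∅≠S⊆L} 2^{r_S - H_∞(X_S|Z=z)})`. -/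
theorem statement14 {L : Type} [Fintype L] [DecidableEq L]
    {𝒳 : L → Type} [∀ l, Fintype (𝒳 l)] {ι : L → Type} [∀ l, Fintype (ι l)]
    [∀ l, Nonempty (ι l)] {𝒵 : Type} [Fintype 𝒵]
    (r : L → ℕ) (f : ∀ l, ι l → 𝒳 l → (Fin (r l) → Bool))
    (huniv : TwoUniversal r f)
    (q : ((∀ l, 𝒳 l) × 𝒵) → ℝ) (hq : IsPMF q)
    (z : 𝒵) (hz : 0 < ∑ x : ∀ l, 𝒳 l, q (x, z)) :
    (∑ k : ∀ l, Fin (r l) → Bool, ∑ g : ∀ l, ι l,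
        |(∏ l, (Fintype.card (ι l) : ℝ))⁻¹ *
            (∑ x : ∀ l, 𝒳 l,
              if (∀ l, f l (g l) (x l) = k l)
              then q (x, z) / (∑ x' : ∀ l, 𝒳 l, q (x', z)) else 0)
          - ((2 : ℝ) ^ (∑ l, r l))⁻¹ * (∏ l, (Fintype.card (ι l) : ℝ))⁻¹|)
      ≤ Real.sqrt (∑ S ∈ Finset.univ.filter (fun S : Finset L => S ≠ ∅),
          (2 : ℝ) ^ ((∑ i ∈ S, (r i : ℝ))
            - minEnt (fun x => q (x, z) / (∑ x' : ∀ l, 𝒳 l, q (x', z))) S)) := by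
  classical
  obtain ⟨hq0, -⟩ := hq
  set Dq := ∑ x' : ∀ l, 𝒳 l, q (x', z) with hDq
  set p : (∀ l, 𝒳 l) → ℝ := fun x => q (x, z) / Dq with hpdef
  set c : ℝ := (∏ l, (Fintype.card (ι l) : ℝ))⁻¹ with hcdef
  set U : ℝ := ((2 : ℝ) ^ (∑ l, r l))⁻¹ * c with hUdef
  set P : (∀ l, Fin (r l) → Bool) → (∀ l, ι l) → ℝ :=
    fun k g => c * ∑ x : ∀ l, 𝒳 l, if (∀ l, f l (g l) (x l) = k l) then p x else 0
    with hPdef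
  set M : Finset L → ℝ := fun T => ⨆ a : ∀ i : T, 𝒳 i.1, marg p T a with hMdef
  have hP : ∀ k g, P k g
      = c * ∑ x : ∀ l, 𝒳 l, if (∀ l, f l (g l) (x l) = k l) then p x else 0 :=
    fun _ _ => rfl
  have hM : ∀ T : Finset L, M T = ⨆ a : ∀ i : T, 𝒳 i.1, marg p T a := fun _ => rfl
  show (∑ k : ∀ l, Fin (r l) → Bool, ∑ g : ∀ l, ι l, |P k g - U|)
    ≤ Real.sqrt (∑ S ∈ Finset.univ.filter (fun S : Finset L => S ≠ ∅),
        (2 : ℝ) ^ ((∑ i ∈ S, (r i : ℝ)) - minEnt p S))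
  -- basic facts
  have hp0 : ∀ x, 0 ≤ p x := fun x => div_nonneg (hq0 _) hz.le
  have hp1 : ∑ x : ∀ l, 𝒳 l, p x = 1 := by
    have h1 : ∑ x : ∀ l, 𝒳 l, p x = (∑ x : ∀ l, 𝒳 l, q (x, z)) / Dq := by
      rw [← Finset.sum_div]
    rw [h1, ← hDq, div_self hz.ne']
  have hXne : Nonempty (∀ l, 𝒳 l) := by
    by_contra hne
    rw [not_nonempty_iff] at hne
    haveI := hne
    rw [hDq] at hz
    simp at hz
  have hXl : ∀ l, Nonempty (𝒳 l) := fun l => ⟨hXne.some l⟩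
  have hTne : ∀ T : Finset L, Nonempty (∀ i : T, 𝒳 i.1) :=
    fun T => ⟨fun i => (hXl i.1).some⟩
  have hcard : ∀ l, (0:ℝ) < (Fintype.card (ι l) : ℝ) := fun l => by
    exact_mod_cast Fintype.card_pos
  have hprodpos : (0:ℝ) < ∏ l, (Fintype.card (ι l) : ℝ) :=
    Finset.prod_pos fun l _ => hcard l
  have hc0 : 0 < c := by rw [hcdef]; exact inv_pos.2 hprodpos
  -- Step A : total mass 1
  have hcollapse : ∀ (g : ∀ l, ι l) (x : ∀ l, 𝒳 l) (v : ℝ),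
      (∑ k : ∀ l, Fin (r l) → Bool, if (∀ l, f l (g l) (x l) = k l) then v else 0) = v := by
    intro g x v
    have e : ∀ k : ∀ l, Fin (r l) → Bool,
        ((∀ l, f l (g l) (x l) = k l) ↔ (fun l => f l (g l) (x l)) = k) :=
      fun k => ⟨funext, fun h l => congrFun h l⟩
    calc (∑ k : ∀ l, Fin (r l) → Bool, if (∀ l, f l (g l) (x l) = k l) then v else 0)
        = ∑ k : ∀ l, Fin (r l) → Bool, if (fun l => f l (g l) (x l)) = k then v else 0 :=
          Finset.sum_congr rfl fun k _ => if_congr (e k) rfl rfl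
      _ = v := by rw [Finset.sum_ite_eq]; simp
  have hPsum : ∑ k : ∀ l, Fin (r l) → Bool, ∑ g : ∀ l, ι l, P k g = 1 := by
    rw [Finset.sum_comm]
    have e : ∀ g : ∀ l, ι l, (∑ k : ∀ l, Fin (r l) → Bool, P k g) = c := by
      intro g
      rw [Finset.sum_congr rfl fun k _ => hP k g, ← Finset.mul_sum, Finset.sum_comm]
      rw [Finset.sum_congr rfl fun x _ => hcollapse g x (p x), hp1, mul_one]
    rw [Finset.sum_congr rfl fun g _ => e g, Finset.sum_const, Finset.card_univ,
      nsmul_eq_mul, Fintype.card_pi, hcdef]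
    push_cast
    rw [mul_inv_cancel₀ hprodpos.ne']
  -- key identity for the second moment
  have hBeq : (∑ k : ∀ l, Fin (r l) → Bool, ∑ g : ∀ l, ι l, (P k g)^2)
      = c^2 * ∑ x : ∀ l, 𝒳 l, ∑ x' : ∀ l, 𝒳 l, p x * p x' *
          ∏ l, ((Finset.univ.filter (fun i : ι l => f l i (x l) = f l i (x' l))).card : ℝ) := by
    have h1 : ∀ (g : ∀ l, ι l) (x x' : ∀ l, 𝒳 l),
        (∑ k : ∀ l, Fin (r l) → Bool,
          (if (∀ l, f l (g l) (x l) = k l) then p x else 0) *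
          (if (∀ l, f l (g l) (x' l) = k l) then p x' else 0))
        = if (∀ l, f l (g l) (x l) = f l (g l) (x' l)) then p x * p x' else 0 := by
      intro g x x'
      have e1 : ∀ k : ∀ l, Fin (r l) → Bool,
          ((∀ l, f l (g l) (x l) = k l) ↔ (fun l => f l (g l) (x l)) = k) :=
        fun k => ⟨funext, fun h l => congrFun h l⟩
      have e2 : ∀ k : ∀ l, Fin (r l) → Bool,
          ((∀ l, f l (g l) (x' l) = k l) ↔ (fun l => f l (g l) (x' l)) = k) :=
        fun k => ⟨funext, fun h l => congrFun h l⟩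
      calc (∑ k : ∀ l, Fin (r l) → Bool,
            (if (∀ l, f l (g l) (x l) = k l) then p x else 0) *
            (if (∀ l, f l (g l) (x' l) = k l) then p x' else 0))
          = ∑ k : ∀ l, Fin (r l) → Bool,
            (if (fun l => f l (g l) (x l)) = k then p x else 0) *
            (if (fun l => f l (g l) (x' l)) = k then p x' else 0) :=
            Finset.sum_congr rfl fun k _ => by
              rw [if_congr (e1 k) rfl rfl, if_congr (e2 k) rfl rfl]
        _ = if (fun l => f l (g l) (x l)) = (fun l => f l (g l) (x' l))
              then p x * p x' else 0 := sum_ite_pair _ _ _ _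
        _ = _ := by rw [if_congr funext_iff rfl rfl]
    have h2 : ∀ x x' : ∀ l, 𝒳 l,
        (∑ g : ∀ l, ι l,
          if (∀ l, f l (g l) (x l) = f l (g l) (x' l)) then p x * p x' else 0)
        = p x * p x' * ∏ l, ((Finset.univ.filter
            (fun i : ι l => f l i (x l) = f l i (x' l))).card : ℝ) := by
      intro x x'
      have e : ∀ g : ∀ l, ι l,
          (if (∀ l, f l (g l) (x l) = f l (g l) (x' l)) then p x * p x' else 0)
          = (∏ l, if f l (g l) (x l) = f l (g l) (x' l) then (1:ℝ) else 0)
              * (p x * p x') := by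
        intro g
        rw [Finset.prod_boole]
        simp only [Finset.mem_univ, forall_true_left]
        split_ifs <;> ring
      rw [Finset.sum_congr rfl fun g _ => e g, ← Finset.sum_mul, mul_comm]
      congr 1
      rw [← Fintype.piFinset_univ]
      calc (∑ g ∈ Fintype.piFinset fun _ => (Finset.univ : Finset _),
            ∏ l, if f l (g l) (x l) = f l (g l) (x' l) then (1:ℝ) else 0)
          = ∏ l, ∑ j : ι l, (if f l j (x l) = f l j (x' l) then (1:ℝ) else 0) :=
            (Finset.prod_univ_sum (fun l : L => (Finset.univ : Finset (ι l)))
              (fun l j => if f l j (x l) = f l j (x' l) then (1:ℝ) else 0)).symm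
        _ = ∏ l, ((Finset.univ.filter
            (fun i : ι l => f l i (x l) = f l i (x' l))).card : ℝ) :=
            Finset.prod_congr rfl fun l _ => Finset.sum_boole _ _
    rw [Finset.sum_comm]
    have step1 : ∀ g : ∀ l, ι l, (∑ k : ∀ l, Fin (r l) → Bool, (P k g)^2)
        = c^2 * ∑ x : ∀ l, 𝒳 l, ∑ x' : ∀ l, 𝒳 l,
            (if (∀ l, f l (g l) (x l) = f l (g l) (x' l)) then p x * p x' else 0) := by
      intro g
      have e : ∀ k, (P k g)^2 = c^2 * ∑ x : ∀ l, 𝒳 l, ∑ x' : ∀ l, 𝒳 l,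
          (if (∀ l, f l (g l) (x l) = k l) then p x else 0) *
          (if (∀ l, f l (g l) (x' l) = k l) then p x' else 0) := by
        intro k
        have e0 : (P k g)^2
            = c^2 * ((∑ x : ∀ l, 𝒳 l, if (∀ l, f l (g l) (x l) = k l) then p x else 0)
              * (∑ x' : ∀ l, 𝒳 l, if (∀ l, f l (g l) (x' l) = k l) then p x' else 0)) := by
          rw [hP k g]; ring
        rw [e0, Finset.sum_mul_sum]
      rw [Finset.sum_congr rfl fun k _ => e k, ← Finset.mul_sum]
      congr 1
      rw [sum_rot3]
      exact Finset.sum_congr rfl fun x _ => Finset.sum_congr rfl fun x' _ => h1 g x x'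
    rw [Finset.sum_congr rfl fun g _ => step1 g, ← Finset.mul_sum]
    congr 1
    rw [sum_rot3]
    exact Finset.sum_congr rfl fun x _ => Finset.sum_congr rfl fun x' _ => h2 x x'
  -- second moment bound
  have hB : (∑ k : ∀ l, Fin (r l) → Bool, ∑ g : ∀ l, ι l, (P k g)^2)
      ≤ c * ∑ x : ∀ l, 𝒳 l, ∑ x' : ∀ l, 𝒳 l, p x * p x' *
          ∏ l, (if x l = x' l then (1:ℝ) else ((2:ℝ)^(r l))⁻¹) := by
    have hcw : ∀ x x' : ∀ l, 𝒳 l,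
        c * ∏ l, ((Finset.univ.filter
            (fun i : ι l => f l i (x l) = f l i (x' l))).card : ℝ)
          ≤ ∏ l, (if x l = x' l then (1:ℝ) else ((2:ℝ)^(r l))⁻¹) := by
      intro x x'
      have e : c * ∏ l, ((Finset.univ.filter
            (fun i : ι l => f l i (x l) = f l i (x' l))).card : ℝ)
          = ∏ l, (((Finset.univ.filter
              (fun i : ι l => f l i (x l) = f l i (x' l))).card : ℝ)
              / (Fintype.card (ι l) : ℝ)) := by
        rw [Finset.prod_div_distrib, div_eq_mul_inv, hcdef]; ring
      rw [e]
      refine Finset.prod_le_prod (fun l _ => by positivity) (fun l _ => ?_)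
      by_cases hxl : x l = x' l
      · rw [if_pos hxl, div_le_one (hcard l)]
        exact_mod_cast Finset.card_filter_le _ _
      · rw [if_neg hxl]
        exact huniv l (x l) (x' l) hxl
    rw [hBeq]
    simp only [Finset.mul_sum]
    refine Finset.sum_le_sum fun x _ => Finset.sum_le_sum fun x' _ => ?_
    have h3 : c^2 * (p x * p x' *
        ∏ l, ((Finset.univ.filter (fun i : ι l => f l i (x l) = f l i (x' l))).card : ℝ))
        = (c * ∏ l, ((Finset.univ.filter
            (fun i : ι l => f l i (x l) = f l i (x' l))).card : ℝ)) * (c * (p x * p x')) := by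
      ring
    have h4 : c * (p x * p x' * ∏ l, (if x l = x' l then (1:ℝ) else ((2:ℝ)^(r l))⁻¹))
        = (∏ l, (if x l = x' l then (1:ℝ) else ((2:ℝ)^(r l))⁻¹)) * (c * (p x * p x')) := by
      ring
    rw [h3, h4]
    exact mul_le_mul_of_nonneg_right (hcw x x')
      (mul_nonneg hc0.le (mul_nonneg (hp0 x) (hp0 x')))
  -- marginal facts
  have hmarg : ∀ (T : Finset L) (a : ∀ i : T, 𝒳 i.1),
      marg p T a = ∑ x : ∀ l, 𝒳 l, (if (fun i : T => x i.1) = a then p x else 0) := by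
    intro T a
    rw [marg]
    refine Finset.sum_congr rfl fun x _ => if_congr ?_ rfl rfl
    exact ⟨funext, fun h i => congrFun h i⟩
  have hmarg0 : ∀ (T : Finset L) (a : ∀ i : T, 𝒳 i.1), 0 ≤ marg p T a := by
    intro T a
    rw [hmarg]
    exact Finset.sum_nonneg fun x _ => by split_ifs; exacts [hp0 x, le_rfl]
  have hmargsum : ∀ T : Finset L, ∑ a : ∀ i : T, 𝒳 i.1, marg p T a = 1 := by
    intro T
    rw [Finset.sum_congr rfl fun a _ => hmarg T a, Finset.sum_comm]
    rw [Finset.sum_congr rfl fun x (_ : x ∈ Finset.univ) => by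
      rw [Finset.sum_ite_eq, if_pos (Finset.mem_univ _)]]
    exact hp1
  have hMle : ∀ (T : Finset L) (a : ∀ i : T, 𝒳 i.1), marg p T a ≤ M T := by
    intro T a
    rw [hM]
    exact le_ciSup (Finite.bddAbove_range _) a
  have hM1 : ∀ T : Finset L, ∑ a : ∀ i : T, 𝒳 i.1, (marg p T a)^2 ≤ M T := by
    intro T
    calc ∑ a : ∀ i : T, 𝒳 i.1, (marg p T a)^2
        ≤ ∑ a : ∀ i : T, 𝒳 i.1, M T * marg p T a :=
          Finset.sum_le_sum fun a _ => by
            rw [sq]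
            exact mul_le_mul_of_nonneg_right (hMle T a) (hmarg0 T a)
      _ = M T * ∑ a : ∀ i : T, 𝒳 i.1, marg p T a := by rw [Finset.mul_sum]
      _ = M T := by rw [hmargsum T, mul_one]
  have hMpos : ∀ T : Finset L, 0 < M T := by
    intro T
    by_contra hle
    push_neg at hle
    have h2 : ∑ a : ∀ i : T, 𝒳 i.1, marg p T a ≤ 0 :=
      Finset.sum_nonpos fun a _ => le_trans (hMle T a) hle
    rw [hmargsum T] at h2
    linarith
  have hc4 : ∀ T : Finset L,
      (∑ a : ∀ i : T, 𝒳 i.1, (marg p T a)^2)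
      = ∑ x : ∀ l, 𝒳 l, ∑ x' : ∀ l, 𝒳 l,
          (if (fun i : T => x i.1) = (fun i : T => x' i.1) then p x * p x' else 0) := by
    intro T
    have e : ∀ a : ∀ i : T, 𝒳 i.1, (marg p T a)^2
        = ∑ x : ∀ l, 𝒳 l, ∑ x' : ∀ l, 𝒳 l,
            (if (fun i : T => x i.1) = a then p x else 0) *
            (if (fun i : T => x' i.1) = a then p x' else 0) := by
      intro a
      rw [hmarg, sq, Finset.sum_mul_sum]
    rw [Finset.sum_congr rfl fun a _ => e a, sum_rot3]
    exact Finset.sum_congr rfl fun x _ => Finset.sum_congr rfl fun x' _ =>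
      sum_ite_pair _ _ _ _
  -- per-fiber bound
  have hcT : ∀ T : Finset L,
      (∑ x : ∀ l, 𝒳 l, ∑ x' : ∀ l, 𝒳 l,
        (if Finset.univ.filter (fun l => x l = x' l) = T
          then p x * p x' * ∏ l ∈ T, (2:ℝ)^(r l) else 0))
      ≤ (∏ l ∈ T, (2:ℝ)^(r l)) * ∑ a : ∀ i : T, 𝒳 i.1, (marg p T a)^2 := by
    intro T
    have hle : ∀ x x' : ∀ l, 𝒳 l,
        (if Finset.univ.filter (fun l => x l = x' l) = T
          then p x * p x' * ∏ l ∈ T, (2:ℝ)^(r l) else 0)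
        ≤ (∏ l ∈ T, (2:ℝ)^(r l)) *
            (if (fun i : T => x i.1) = (fun i : T => x' i.1) then p x * p x' else 0) := by
      intro x x'
      have hprod0 : (0:ℝ) ≤ ∏ l ∈ T, (2:ℝ)^(r l) :=
        Finset.prod_nonneg fun l _ => by positivity
      by_cases h1 : Finset.univ.filter (fun l => x l = x' l) = T
      · have h2 : (fun i : T => x i.1) = (fun i : T => x' i.1) := by
          funext i
          have hi : i.1 ∈ Finset.univ.filter (fun l => x l = x' l) := by
            rw [h1]; exact i.2
          exact (Finset.mem_filter.1 hi).2
        rw [if_pos h1, if_pos h2]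
        exact le_of_eq (by ring)
      · rw [if_neg h1]
        split_ifs with h2
        · exact mul_nonneg hprod0 (mul_nonneg (hp0 x) (hp0 x'))
        · rw [mul_zero]
    calc (∑ x : ∀ l, 𝒳 l, ∑ x' : ∀ l, 𝒳 l,
          (if Finset.univ.filter (fun l => x l = x' l) = T
            then p x * p x' * ∏ l ∈ T, (2:ℝ)^(r l) else 0))
        ≤ ∑ x : ∀ l, 𝒳 l, ∑ x' : ∀ l, 𝒳 l, (∏ l ∈ T, (2:ℝ)^(r l)) *
            (if (fun i : T => x i.1) = (fun i : T => x' i.1) then p x * p x' else 0) :=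
          Finset.sum_le_sum fun x _ => Finset.sum_le_sum fun x' _ => hle x x'
      _ = (∏ l ∈ T, (2:ℝ)^(r l)) * ∑ x : ∀ l, 𝒳 l, ∑ x' : ∀ l, 𝒳 l,
            (if (fun i : T => x i.1) = (fun i : T => x' i.1) then p x * p x' else 0) := by
          simp only [← Finset.mul_sum]
      _ = (∏ l ∈ T, (2:ℝ)^(r l)) * ∑ a : ∀ i : T, 𝒳 i.1, (marg p T a)^2 := by
          rw [hc4 T]
  have hempty : (∑ x : ∀ l, 𝒳 l, ∑ x' : ∀ l, 𝒳 l,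
      (if Finset.univ.filter (fun l => x l = x' l) = (∅ : Finset L)
        then p x * p x' * ∏ l ∈ (∅ : Finset L), (2:ℝ)^(r l) else 0)) ≤ 1 := by
    refine le_trans (hcT ∅) ?_
    rw [Finset.prod_empty, one_mul]
    refine le_trans (hM1 ∅) ?_
    haveI := hTne (∅ : Finset L)
    rw [hM]
    refine ciSup_le fun a => ?_
    rw [← hmargsum (∅ : Finset L)]
    exact Finset.single_le_sum (fun b _ => hmarg0 ∅ b) (Finset.mem_univ a)
  -- the grouping bound
  have hC : (∑ x : ∀ l, 𝒳 l, ∑ x' : ∀ l, 𝒳 l, p x * p x' *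
        ∏ l, (if x l = x' l then ((2:ℝ)^(r l)) else 1))
      ≤ 1 + ∑ T ∈ Finset.univ.filter (fun T : Finset L => T ≠ ∅),
          (∏ l ∈ T, (2:ℝ)^(r l)) * M T := by
    have hgroup : (∑ x : ∀ l, 𝒳 l, ∑ x' : ∀ l, 𝒳 l, p x * p x' *
          ∏ l, (if x l = x' l then ((2:ℝ)^(r l)) else 1))
        = ∑ T ∈ (Finset.univ : Finset (Finset L)), ∑ x : ∀ l, 𝒳 l, ∑ x' : ∀ l, 𝒳 l,
            (if Finset.univ.filter (fun l => x l = x' l) = T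
              then p x * p x' * ∏ l ∈ T, (2:ℝ)^(r l) else 0) := by
      rw [sum_rot3]
      refine Finset.sum_congr rfl fun x _ => Finset.sum_congr rfl fun x' _ => ?_
      rw [Finset.sum_ite_eq, if_pos (Finset.mem_univ _)]
      congr 1
      rw [Finset.prod_filter]
    rw [hgroup,
      Finset.sum_eq_sum_sdiff_singleton_add (Finset.mem_univ (∅ : Finset L)), add_comm]
    have hsetseq : (Finset.univ : Finset (Finset L)) \ {∅}
        = Finset.univ.filter (fun T : Finset L => T ≠ ∅) := by
      rw [Finset.filter_ne', Finset.erase_eq]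
    rw [hsetseq]
    refine add_le_add hempty (Finset.sum_le_sum fun T _ => ?_)
    exact le_trans (hcT T)
      (mul_le_mul_of_nonneg_left (hM1 T)
        (Finset.prod_nonneg fun l _ => by positivity))
  -- rpow rewriting of the target
  have htarget : ∀ T ∈ Finset.univ.filter (fun S : Finset L => S ≠ ∅),
      (2:ℝ) ^ ((∑ i ∈ T, (r i : ℝ)) - minEnt p T)
        = (∏ l ∈ T, (2:ℝ)^(r l)) * M T := by
    intro T _
    rw [minEnt, ← hM T, sub_neg_eq_add, Real.rpow_add two_pos,
      Real.rpow_logb two_pos (by norm_num) (hMpos T)]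
    congr 1
    rw [← Nat.cast_sum, Real.rpow_natCast, ← Finset.prod_pow_eq_pow_sum]
  -- cardinality
  have hNn : ((Fintype.card ((∀ l, Fin (r l) → Bool) × (∀ l, ι l)) : ℕ) : ℝ)
      = (2:ℝ)^(∑ l, r l) * ∏ l, (Fintype.card (ι l) : ℝ) := by
    rw [Fintype.card_prod, Fintype.card_pi, Fintype.card_pi]
    push_cast
    congr 1
    rw [← Finset.prod_pow_eq_pow_sum]
    refine Finset.prod_congr rfl fun l _ => ?_
    rw [Fintype.card_fun]
    simp
  set n : ℕ := Fintype.card ((∀ l, Fin (r l) → Bool) × (∀ l, ι l)) with hndef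
  have hnU : (n:ℝ) * U = 1 := by
    rw [hUdef, hcdef, ← mul_assoc, hNn]
    field_simp
  have hnc : (n:ℝ) * c = (2:ℝ)^(∑ l, r l) := by
    rw [hcdef, hNn]
    field_simp
  -- Cauchy-Schwarz
  have hcs : (∑ k : ∀ l, Fin (r l) → Bool, ∑ g : ∀ l, ι l, |P k g - U|)^2
      ≤ (n:ℝ) * ∑ k : ∀ l, Fin (r l) → Bool, ∑ g : ∀ l, ι l, (P k g - U)^2 := by
    have h0 := sq_sum_le_card_mul_sum_sq
      (s := (Finset.univ : Finset ((∀ l, Fin (r l) → Bool) × (∀ l, ι l))))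
      (f := fun kg => |P kg.1 kg.2 - U|)
    rw [Finset.card_univ] at h0
    calc (∑ k : ∀ l, Fin (r l) → Bool, ∑ g : ∀ l, ι l, |P k g - U|)^2
        = (∑ kg : (∀ l, Fin (r l) → Bool) × (∀ l, ι l), |P kg.1 kg.2 - U|)^2 := by
          simp only [Fintype.sum_prod_type]
      _ ≤ (n:ℝ) * ∑ kg : (∀ l, Fin (r l) → Bool) × (∀ l, ι l), |P kg.1 kg.2 - U|^2 := h0
      _ = (n:ℝ) * ∑ k : ∀ l, Fin (r l) → Bool, ∑ g : ∀ l, ι l, (P k g - U)^2 := by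
          simp only [Fintype.sum_prod_type, sq_abs]
  -- variance expansion
  have hvar : (n:ℝ) * (∑ k : ∀ l, Fin (r l) → Bool, ∑ g : ∀ l, ι l, (P k g - U)^2)
      = (n:ℝ) * (∑ k : ∀ l, Fin (r l) → Bool, ∑ g : ∀ l, ι l, (P k g)^2) - 1 := by
    have hQsum : (∑ kg : (∀ l, Fin (r l) → Bool) × (∀ l, ι l), P kg.1 kg.2) = 1 := by
      simp only [Fintype.sum_prod_type]; exact hPsum
    have e1 : ∀ kg : (∀ l, Fin (r l) → Bool) × (∀ l, ι l),
        (P kg.1 kg.2 - U)^2 = (P kg.1 kg.2)^2 - 2*U*(P kg.1 kg.2) + U^2 := fun kg => by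
      ring
    have e2 : (∑ kg : (∀ l, Fin (r l) → Bool) × (∀ l, ι l), (P kg.1 kg.2 - U)^2)
        = (∑ kg : (∀ l, Fin (r l) → Bool) × (∀ l, ι l), (P kg.1 kg.2)^2)
          - 2*U*(∑ kg : (∀ l, Fin (r l) → Bool) × (∀ l, ι l), P kg.1 kg.2)
          + (n:ℝ)*U^2 := by
      rw [Finset.sum_congr rfl fun kg _ => e1 kg, Finset.sum_add_distrib,
        Finset.sum_sub_distrib, ← Finset.mul_sum, Finset.sum_const, Finset.card_univ,
        nsmul_eq_mul, ← hndef]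
    calc (n:ℝ) * (∑ k : ∀ l, Fin (r l) → Bool, ∑ g : ∀ l, ι l, (P k g - U)^2)
        = (n:ℝ) * (∑ kg : (∀ l, Fin (r l) → Bool) × (∀ l, ι l), (P kg.1 kg.2 - U)^2) := by
          simp only [Fintype.sum_prod_type]
      _ = (n:ℝ) * ((∑ kg : (∀ l, Fin (r l) → Bool) × (∀ l, ι l), (P kg.1 kg.2)^2)
            - 2*U*1 + (n:ℝ)*U^2) := by rw [e2, hQsum]
      _ = (n:ℝ) * (∑ kg : (∀ l, Fin (r l) → Bool) × (∀ l, ι l), (P kg.1 kg.2)^2)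
            - 2*((n:ℝ)*U) + ((n:ℝ)*U)^2 := by ring
      _ = (n:ℝ) * (∑ kg : (∀ l, Fin (r l) → Bool) × (∀ l, ι l), (P kg.1 kg.2)^2) - 1 := by
          rw [hnU]; ring
      _ = (n:ℝ) * (∑ k : ∀ l, Fin (r l) → Bool, ∑ g : ∀ l, ι l, (P k g)^2) - 1 := by
          simp only [Fintype.sum_prod_type]
  -- main bound
  have hmain : (n:ℝ) * (∑ k : ∀ l, Fin (r l) → Bool, ∑ g : ∀ l, ι l, (P k g)^2) - 1
      ≤ ∑ T ∈ Finset.univ.filter (fun T : Finset L => T ≠ ∅),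
          (∏ l ∈ T, (2:ℝ)^(r l)) * M T := by
    have h1 : (n:ℝ) * (∑ k : ∀ l, Fin (r l) → Bool, ∑ g : ∀ l, ι l, (P k g)^2)
        ≤ (n:ℝ) * (c * ∑ x : ∀ l, 𝒳 l, ∑ x' : ∀ l, 𝒳 l, p x * p x' *
            ∏ l, (if x l = x' l then (1:ℝ) else ((2:ℝ)^(r l))⁻¹)) :=
      mul_le_mul_of_nonneg_left hB (Nat.cast_nonneg n)
    have h2 : (n:ℝ) * (c * ∑ x : ∀ l, 𝒳 l, ∑ x' : ∀ l, 𝒳 l, p x * p x' *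
            ∏ l, (if x l = x' l then (1:ℝ) else ((2:ℝ)^(r l))⁻¹))
        = ∑ x : ∀ l, 𝒳 l, ∑ x' : ∀ l, 𝒳 l, p x * p x' *
            ∏ l, (if x l = x' l then ((2:ℝ)^(r l)) else 1) := by
      rw [← mul_assoc, hnc]
      simp only [Finset.mul_sum]
      refine Finset.sum_congr rfl fun x _ => Finset.sum_congr rfl fun x' _ => ?_
      have e : (2:ℝ)^(∑ l, r l) * (p x * p x' *
            ∏ l, (if x l = x' l then (1:ℝ) else ((2:ℝ)^(r l))⁻¹))
          = p x * p x' * ((2:ℝ)^(∑ l, r l) *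
            ∏ l, (if x l = x' l then (1:ℝ) else ((2:ℝ)^(r l))⁻¹)) := by ring
      rw [e]
      congr 1
      rw [← Finset.prod_pow_eq_pow_sum, ← Finset.prod_mul_distrib]
      refine Finset.prod_congr rfl fun l _ => ?_
      split_ifs with h
      · ring
      · exact mul_inv_cancel₀ (by positivity)
    rw [h2] at h1
    linarith [hC]
  -- conclusion
  have hSL0 : 0 ≤ ∑ k : ∀ l, Fin (r l) → Bool, ∑ g : ∀ l, ι l, |P k g - U| :=
    Finset.sum_nonneg fun _ _ => Finset.sum_nonneg fun _ _ => abs_nonneg _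
  have htargeq : (∑ S ∈ Finset.univ.filter (fun S : Finset L => S ≠ ∅),
        (2 : ℝ) ^ ((∑ i ∈ S, (r i : ℝ)) - minEnt p S))
      = ∑ T ∈ Finset.univ.filter (fun T : Finset L => T ≠ ∅),
          (∏ l ∈ T, (2:ℝ)^(r l)) * M T :=
    Finset.sum_congr rfl htarget
  calc (∑ k : ∀ l, Fin (r l) → Bool, ∑ g : ∀ l, ι l, |P k g - U|)
      = Real.sqrt ((∑ k : ∀ l, Fin (r l) → Bool, ∑ g : ∀ l, ι l, |P k g - U|)^2) :=
        (Real.sqrt_sq hSL0).symm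
    _ ≤ Real.sqrt (∑ S ∈ Finset.univ.filter (fun S : Finset L => S ≠ ∅),
          (2 : ℝ) ^ ((∑ i ∈ S, (r i : ℝ)) - minEnt p S)) := by
        apply Real.sqrt_le_sqrt
        rw [htargeq]
        calc (∑ k : ∀ l, Fin (r l) → Bool, ∑ g : ∀ l, ι l, |P k g - U|)^2
            ≤ (n:ℝ) * ∑ k : ∀ l, Fin (r l) → Bool, ∑ g : ∀ l, ι l, (P k g - U)^2 := hcs
          _ = (n:ℝ) * (∑ k : ∀ l, Fin (r l) → Bool, ∑ g : ∀ l, ι l, (P k g)^2) - 1 := hvar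
          _ ≤ _ := hmain
end
end

section
/- With the same setup and averaging over Z, V(p_{F_L(X_L),F_L,Z}, p_U ⊗ p_{U_𝓕} ⊗ p_Z) ≤ sqrt( Σ_{∅≠S⊆L} 2^{r_S − H̃_∞(X_S | Z)} ), where H̃_∞(X|Z) = −log E_Z[max_x p_{X|Z}(x|Z)] is the average conditional min-entropy. -/
noncomputable section
open Finset
open scoped Classical BigOperators

/-- Average conditional min-entropy (base 2):
`H̃_∞(X_S|Z) = -log₂ Σ_z max_a P[X_S = a, Z = z]`. -/
def avgMinEnt {L : Type} [Fintype L] [DecidableEq L] {𝒳 : L → Type} [∀ l, Fintype (𝒳 l)]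
    {𝒵 : Type} [Fintype 𝒵] (q : ((∀ l, 𝒳 l) × 𝒵) → ℝ) (S : Finset L) : ℝ :=
  - Real.logb 2 (∑ z : 𝒵, ⨆ a : ∀ i : S, 𝒳 i.1,
      ∑ x : ∀ l, 𝒳 l, if (∀ i : S, x i.1 = a i) then q (x, z) else 0)


set_option maxHeartbeats 1000000

/- ## Auxiliary lemmas -/

lemma lhl_cs_helper {J : Type} [Fintype J] (w A : J → ℝ) (hw : ∀ j, 0 ≤ w j)
    (h0 : ∀ j, w j = 0 → A j = 0) :
    ∑ j, |A j| ≤ Real.sqrt ((∑ j, w j) * (∑ j, A j ^ 2 / w j)) := by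
  have key : (∑ j, |A j|) ^ 2 ≤ (∑ j, w j) * (∑ j, A j ^ 2 / w j) := by
    have h := Finset.sum_mul_sq_le_sq_mul_sq Finset.univ
      (fun j => Real.sqrt (w j)) (fun j => |A j| / Real.sqrt (w j))
    have e1 : ∀ j : J, Real.sqrt (w j) * (|A j| / Real.sqrt (w j)) = |A j| := by
      intro j
      rcases eq_or_lt_of_le (hw j) with h' | h'
      · simp [← h', h0 j h'.symm]
      · rw [mul_div_cancel₀ _ (by positivity)]
    have e2 : ∀ j : J, Real.sqrt (w j) ^ 2 = w j := fun j => Real.sq_sqrt (hw j)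
    have e3 : ∀ j : J, (|A j| / Real.sqrt (w j)) ^ 2 = A j ^ 2 / w j := by
      intro j; rw [div_pow, sq_abs, Real.sq_sqrt (hw j)]
    simp only [e1, e2, e3] at h
    exact h
  calc ∑ j, |A j| = Real.sqrt ((∑ j, |A j|) ^ 2) := by
        rw [Real.sqrt_sq (Finset.sum_nonneg fun j _ => abs_nonneg _)]
    _ ≤ _ := Real.sqrt_le_sqrt key

lemma lhl_le_two_rpow_logb (s : ℝ) (hs : 0 ≤ s) : s ≤ (2 : ℝ) ^ (Real.logb 2 s) := by
  rcases eq_or_lt_of_le hs with h | h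
  · rw [← h]; positivity
  · rw [Real.rpow_logb two_pos (by norm_num) h]

lemma sum_ite_forall_eq {K : Type} [Fintype K] [DecidableEq K] {β : K → Type}
    [∀ l, Fintype (β l)]
    (F : ∀ l, β l) (c : ℝ) (d : ∀ k : ∀ l, β l, Decidable (∀ l, F l = k l)) :
    ∑ k : ∀ l, β l, (@ite ℝ (∀ l, F l = k l) (d k) c 0) = c := by
  classical
  have e : ∀ k : ∀ l, β l, @ite ℝ (∀ l, F l = k l) (d k) c 0
      = if F = k then c else 0 := by
    intro k
    by_cases h : ∀ l, F l = k l
    · rw [if_pos h, if_pos (funext h)]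
    · rw [if_neg h, if_neg (fun hc => h (fun l => congrFun hc l))]
  simp only [e]
  rw [Fintype.sum_ite_eq]

lemma sum_indicator_pair {K : Type} [Fintype K] [DecidableEq K] {β : K → Type}
    [∀ l, Fintype (β l)] (F F' : ∀ l, β l)
    (dF : ∀ k : ∀ l, β l, Decidable (∀ l, F l = k l))
    (dF' : ∀ k : ∀ l, β l, Decidable (∀ l, F' l = k l))
    (dFF : Decidable (∀ l, F l = F' l)) :
    ∑ k : ∀ l, β l, (@ite ℝ (∀ l, F l = k l) (dF k) 1 0) *
        (@ite ℝ (∀ l, F' l = k l) (dF' k) 1 0)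
      = @ite ℝ (∀ l, F l = F' l) dFF 1 0 := by
  classical
  have gen : ∀ (G : ∀ l, β l) (dG : ∀ k : ∀ l, β l, Decidable (∀ l, G l = k l))
      (k : ∀ l, β l), @ite ℝ (∀ l, G l = k l) (dG k) 1 0 = if G = k then (1:ℝ) else 0 := by
    intro G dG k
    by_cases h : ∀ l, G l = k l
    · rw [if_pos h, if_pos (funext h)]
    · rw [if_neg h, if_neg (fun hc => h (fun l => congrFun hc l))]
  have e : ∀ k : ∀ l, β l,
      (@ite ℝ (∀ l, F l = k l) (dF k) 1 0) * (@ite ℝ (∀ l, F' l = k l) (dF' k) 1 0)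
      = (if F = k then (1:ℝ) else 0) * (if F' = k then (1:ℝ) else 0) := fun k => by
    rw [gen F dF k, gen F' dF' k]
  have e2 : @ite ℝ (∀ l, F l = F' l) dFF 1 0 = if F = F' then (1:ℝ) else 0 := by
    by_cases h : ∀ l, F l = F' l
    · rw [if_pos h, if_pos (funext h)]
    · rw [if_neg h, if_neg (fun hc => h (fun l => congrFun hc l))]
  simp only [e, e2]
  by_cases hFF : F = F'
  · subst hFF
    have e3 : ∀ k : ∀ l, β l, (if F = k then (1:ℝ) else 0) * (if F = k then (1:ℝ) else 0)
        = if F = k then (1:ℝ) else 0 := by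
      intro k; by_cases h : F = k <;> simp [h]
    simp only [e3]
    rw [Fintype.sum_ite_eq]
    simp
  · rw [if_neg hFF, Finset.sum_eq_zero]
    intro k _
    by_cases h1 : F = k
    · by_cases h2 : F' = k
      · exact absurd (h1.trans h2.symm) hFF
      · simp [h1, h2]
    · simp [h1]

lemma lhl_swap3 {A B C : Type} [Fintype A] [Fintype B] [Fintype C] (F : A → B → C → ℝ) :
    ∑ a : A, ∑ b : B, ∑ c : C, F a b c = ∑ c : C, ∑ a : A, ∑ b : B, F a b c :=
  calc ∑ a : A, ∑ b : B, ∑ c : C, F a b c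
      = ∑ a : A, ∑ c : C, ∑ b : B, F a b c :=
        Finset.sum_congr rfl fun a _ => Finset.sum_comm
    _ = ∑ c : C, ∑ a : A, ∑ b : B, F a b c := Finset.sum_comm

lemma lhl_triple_swap {K X : Type} [Fintype K] [Fintype X] (F : K → X → X → ℝ) :
    ∑ k : K, ∑ x : X, ∑ x' : X, F k x x' = ∑ x : X, ∑ x' : X, ∑ k : K, F k x x' :=
  calc ∑ k : K, ∑ x : X, ∑ x' : X, F k x x'
      = ∑ x : X, ∑ k : K, ∑ x' : X, F k x x' := Finset.sum_comm
    _ = ∑ x : X, ∑ x' : X, ∑ k : K, F k x x' :=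
        Finset.sum_congr rfl fun x _ => Finset.sum_comm

lemma lhl_ite_nonneg {P : Prop} {d : Decidable P} {c : ℝ} (hc : 0 ≤ c) :
    0 ≤ @ite ℝ P d c 0 := by split <;> simp [hc]

lemma lhl_sup_le_helper {α : Type} [Fintype α] [Nonempty α] (h : α → ℝ) :
    ∀ a, h a ≤ ⨆ b, h b := fun a =>
  le_ciSup (Set.Finite.bddAbove (Set.finite_range h)) a

lemma lhl_sup_nonneg_helper {α : Type} [Fintype α] [Nonempty α] (h : α → ℝ)
    (hh : ∀ a, 0 ≤ h a) : 0 ≤ ⨆ b, h b :=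
  le_trans (hh (Classical.arbitrary α)) (lhl_sup_le_helper h _)

lemma count_bound {L : Type} [Fintype L] [DecidableEq L]
    {𝒳 : L → Type} {ι : L → Type} [∀ l, Fintype (ι l)] [∀ l, Nonempty (ι l)]
    (r : L → ℕ) (f : ∀ l, ι l → 𝒳 l → (Fin (r l) → Bool))
    (huniv : TwoUniversal r f) (x x' : ∀ l, 𝒳 l) :
    ∑ g : ∀ l, ι l, (if (∀ l, f l (g l) (x l) = f l (g l) (x' l)) then (1:ℝ) else 0)
      ≤ (∏ l, (Fintype.card (ι l) : ℝ)) *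
        ∑ S : Finset L, (if (∀ l ∈ S, x l = x' l) then (1:ℝ) else 0) *
          ((2:ℝ) ^ (∑ l ∈ univ \ S, r l))⁻¹ := by
  -- factor over coordinates
  have hfac : ∑ g : ∀ l, ι l, (if (∀ l, f l (g l) (x l) = f l (g l) (x' l)) then (1:ℝ) else 0)
      = ∏ l, ((Finset.univ.filter (fun i : ι l => f l i (x l) = f l i (x' l))).card : ℝ) := by
    have h1 : ∀ g : ∀ l, ι l, (if (∀ l, f l (g l) (x l) = f l (g l) (x' l)) then (1:ℝ) else 0)
        = ∏ l, (if f l (g l) (x l) = f l (g l) (x' l) then (1:ℝ) else 0) := by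
      intro g; rw [Finset.prod_boole]; simp
    simp only [h1]
    have key := Finset.prod_univ_sum (fun _ : L => (Finset.univ : Finset (ι _)))
      (fun l i => if f l i (x l) = f l i (x' l) then (1:ℝ) else 0)
    rw [Fintype.piFinset_univ] at key
    rw [← key]
    refine Finset.prod_congr rfl fun l _ => ?_
    rw [Finset.sum_boole]
  rw [hfac]
  -- per-coordinate bound
  have hcard : ∀ l, (0:ℝ) < (Fintype.card (ι l) : ℝ) := fun l => by
    exact_mod_cast Fintype.card_pos
  have hper : ∀ l, ((Finset.univ.filter (fun i : ι l => f l i (x l) = f l i (x' l))).card : ℝ)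
      ≤ (Fintype.card (ι l) : ℝ) *
        ((if x l = x' l then (1:ℝ) else 0) + ((2:ℝ) ^ (r l))⁻¹) := by
    intro l
    by_cases h : x l = x' l
    · have h1 : ((Finset.univ.filter (fun i : ι l => f l i (x l) = f l i (x' l))).card : ℝ)
          ≤ (Fintype.card (ι l) : ℝ) := by
        exact_mod_cast Finset.card_filter_le _ _
      have h2 : (0:ℝ) ≤ (Fintype.card (ι l) : ℝ) * ((2:ℝ) ^ (r l))⁻¹ := by positivity
      rw [if_pos h, mul_add, mul_one]
      linarith
    · have := huniv l (x l) (x' l) h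
      rw [div_le_iff₀ (hcard l)] at this
      simp only [if_neg h, zero_add]
      calc ((Finset.univ.filter (fun i : ι l => f l i (x l) = f l i (x' l))).card : ℝ)
          ≤ ((2:ℝ) ^ (r l))⁻¹ * (Fintype.card (ι l) : ℝ) := this
        _ = _ := by ring
  calc ∏ l, ((Finset.univ.filter (fun i : ι l => f l i (x l) = f l i (x' l))).card : ℝ)
      ≤ ∏ l, ((Fintype.card (ι l) : ℝ) *
          ((if x l = x' l then (1:ℝ) else 0) + ((2:ℝ) ^ (r l))⁻¹)) := by
        refine Finset.prod_le_prod (fun l _ => by positivity) (fun l _ => hper l)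
    _ = (∏ l, (Fintype.card (ι l) : ℝ)) *
        ∏ l, ((if x l = x' l then (1:ℝ) else 0) + ((2:ℝ) ^ (r l))⁻¹) := by
        rw [Finset.prod_mul_distrib]
    _ = _ := by
        congr 1
        rw [Finset.prod_add, Finset.powerset_univ]
        refine Finset.sum_congr rfl fun S _ => ?_
        rw [Finset.prod_boole, Finset.prod_inv_distrib, Finset.prod_pow_eq_pow_sum]
        by_cases hS : ∀ l ∈ S, x l = x' l <;> simp [hS]

lemma collision {L : Type} [Fintype L] [DecidableEq L]
    {𝒳 : L → Type} [∀ l, Fintype (𝒳 l)] {ι : L → Type} [∀ l, Fintype (ι l)]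
    [∀ l, Nonempty (ι l)]
    (r : L → ℕ) (f : ∀ l, ι l → 𝒳 l → (Fin (r l) → Bool))
    (huniv : TwoUniversal r f)
    (p : (∀ l, 𝒳 l) → ℝ) (hp : ∀ x, 0 ≤ p x) :
    ∑ g : ∀ l, ι l, ∑ k : ∀ l, Fin (r l) → Bool,
        (∑ x : ∀ l, 𝒳 l, if (∀ l, f l (g l) (x l) = k l) then p x else 0) ^ 2
      ≤ (∏ l, (Fintype.card (ι l) : ℝ)) *
        ∑ S : Finset L, ((2:ℝ) ^ (∑ l ∈ univ \ S, r l))⁻¹ *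
          ∑ a : ∀ i : S, 𝒳 i.1,
            (∑ x : ∀ l, 𝒳 l, if (∀ i : S, x i.1 = a i) then p x else 0) ^ 2 := by
  -- Step 1: expand the square and sum over k
  have h1 : ∀ g : ∀ l, ι l, ∑ k : ∀ l, Fin (r l) → Bool,
      (∑ x : ∀ l, 𝒳 l, if (∀ l, f l (g l) (x l) = k l) then p x else 0) ^ 2
      = ∑ x : ∀ l, 𝒳 l, ∑ x' : ∀ l, 𝒳 l,
          (if (∀ l, f l (g l) (x l) = f l (g l) (x' l)) then (1:ℝ) else 0) * (p x * p x') := by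
    intro g
    have e : ∀ (k : ∀ l, Fin (r l) → Bool) (x : ∀ l, 𝒳 l),
        (if (∀ l, f l (g l) (x l) = k l) then p x else 0)
        = (if (∀ l, f l (g l) (x l) = k l) then (1:ℝ) else 0) * p x := by
      intro k x; rw [boole_mul]
    calc ∑ k : ∀ l, Fin (r l) → Bool,
        (∑ x : ∀ l, 𝒳 l, if (∀ l, f l (g l) (x l) = k l) then p x else 0) ^ 2
        = ∑ k : ∀ l, Fin (r l) → Bool, ∑ x : ∀ l, 𝒳 l, ∑ x' : ∀ l, 𝒳 l,
            ((if (∀ l, f l (g l) (x l) = k l) then (1:ℝ) else 0) * p x) *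
            ((if (∀ l, f l (g l) (x' l) = k l) then (1:ℝ) else 0) * p x') := by
          refine Finset.sum_congr rfl fun k _ => ?_
          rw [sq, Finset.sum_mul_sum]
          simp only [e]
      _ = ∑ x : ∀ l, 𝒳 l, ∑ x' : ∀ l, 𝒳 l, ∑ k : ∀ l, Fin (r l) → Bool,
            ((if (∀ l, f l (g l) (x l) = k l) then (1:ℝ) else 0) * p x) *
            ((if (∀ l, f l (g l) (x' l) = k l) then (1:ℝ) else 0) * p x') := lhl_triple_swap _
      _ = ∑ x : ∀ l, 𝒳 l, ∑ x' : ∀ l, 𝒳 l,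
            (if (∀ l, f l (g l) (x l) = f l (g l) (x' l)) then (1:ℝ) else 0) * (p x * p x') := by
          refine Finset.sum_congr rfl fun x _ => Finset.sum_congr rfl fun x' _ => ?_
          calc ∑ k : ∀ l, Fin (r l) → Bool,
              ((if (∀ l, f l (g l) (x l) = k l) then (1:ℝ) else 0) * p x) *
              ((if (∀ l, f l (g l) (x' l) = k l) then (1:ℝ) else 0) * p x')
              = (∑ k : ∀ l, Fin (r l) → Bool,
                  (if (∀ l, f l (g l) (x l) = k l) then (1:ℝ) else 0) *
                  (if (∀ l, f l (g l) (x' l) = k l) then (1:ℝ) else 0)) * (p x * p x') := by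
                rw [Finset.sum_mul]
                exact Finset.sum_congr rfl fun k _ => by ring
            _ = _ := congrArg (fun t => t * (p x * p x'))
                (sum_indicator_pair (fun l => f l (g l) (x l)) (fun l => f l (g l) (x' l)) _ _ _)
  -- Step 3 helper: collision sum over a subset
  have h3 : ∀ S : Finset L,
      ∑ a : ∀ i : S, 𝒳 i.1, (∑ x : ∀ l, 𝒳 l, if (∀ i : S, x i.1 = a i) then p x else 0) ^ 2
      = ∑ x : ∀ l, 𝒳 l, ∑ x' : ∀ l, 𝒳 l,
          (if (∀ l ∈ S, x l = x' l) then (1:ℝ) else 0) * (p x * p x') := by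
    intro S
    have e : ∀ (a : ∀ i : S, 𝒳 i.1) (x : ∀ l, 𝒳 l),
        (if (∀ i : S, x i.1 = a i) then p x else 0)
        = (if (∀ i : S, x i.1 = a i) then (1:ℝ) else 0) * p x := by
      intro a x; rw [boole_mul]
    calc ∑ a : ∀ i : S, 𝒳 i.1,
        (∑ x : ∀ l, 𝒳 l, if (∀ i : S, x i.1 = a i) then p x else 0) ^ 2
        = ∑ a : ∀ i : S, 𝒳 i.1, ∑ x : ∀ l, 𝒳 l, ∑ x' : ∀ l, 𝒳 l,
            ((if (∀ i : S, x i.1 = a i) then (1:ℝ) else 0) * p x) *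
            ((if (∀ i : S, x' i.1 = a i) then (1:ℝ) else 0) * p x') := by
          refine Finset.sum_congr rfl fun a _ => ?_
          rw [sq, Finset.sum_mul_sum]
          simp only [e]
      _ = ∑ x : ∀ l, 𝒳 l, ∑ x' : ∀ l, 𝒳 l, ∑ a : ∀ i : S, 𝒳 i.1,
            ((if (∀ i : S, x i.1 = a i) then (1:ℝ) else 0) * p x) *
            ((if (∀ i : S, x' i.1 = a i) then (1:ℝ) else 0) * p x') := lhl_triple_swap _
      _ = _ := by
          refine Finset.sum_congr rfl fun x _ => Finset.sum_congr rfl fun x' _ => ?_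
          calc ∑ a : ∀ i : S, 𝒳 i.1,
              ((if (∀ i : S, x i.1 = a i) then (1:ℝ) else 0) * p x) *
              ((if (∀ i : S, x' i.1 = a i) then (1:ℝ) else 0) * p x')
              = (∑ a : ∀ i : S, 𝒳 i.1,
                  (if (∀ i : S, x i.1 = a i) then (1:ℝ) else 0) *
                  (if (∀ i : S, x' i.1 = a i) then (1:ℝ) else 0)) * (p x * p x') := by
                rw [Finset.sum_mul]
                exact Finset.sum_congr rfl fun a _ => by ring
            _ = (if (∀ i : S, x i.1 = x' i.1) then (1:ℝ) else 0) * (p x * p x') :=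
                congrArg (fun t => t * (p x * p x'))
                  (sum_indicator_pair (K := {i // i ∈ S}) (β := fun i => 𝒳 i.1) (fun i => x i.1) (fun i => x' i.1) _ _ _)
            _ = _ := by
                congr 1
                have hiff : (∀ i : S, x i.1 = x' i.1) ↔ (∀ l ∈ S, x l = x' l) := Subtype.forall
                exact if_congr hiff rfl rfl
  -- Step 2: sum over g and apply the count bound
  calc ∑ g : ∀ l, ι l, ∑ k : ∀ l, Fin (r l) → Bool,
        (∑ x : ∀ l, 𝒳 l, if (∀ l, f l (g l) (x l) = k l) then p x else 0) ^ 2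
      = ∑ g : ∀ l, ι l, ∑ x : ∀ l, 𝒳 l, ∑ x' : ∀ l, 𝒳 l,
          (if (∀ l, f l (g l) (x l) = f l (g l) (x' l)) then (1:ℝ) else 0) * (p x * p x') :=
        Finset.sum_congr rfl fun g _ => h1 g
    _ = ∑ x : ∀ l, 𝒳 l, ∑ x' : ∀ l, 𝒳 l, ∑ g : ∀ l, ι l,
          (if (∀ l, f l (g l) (x l) = f l (g l) (x' l)) then (1:ℝ) else 0) * (p x * p x') :=
        lhl_triple_swap _
    _ ≤ ∑ x : ∀ l, 𝒳 l, ∑ x' : ∀ l, 𝒳 l,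
          ((∏ l, (Fintype.card (ι l) : ℝ)) *
            ∑ S : Finset L, (if (∀ l ∈ S, x l = x' l) then (1:ℝ) else 0) *
              ((2:ℝ) ^ (∑ l ∈ univ \ S, r l))⁻¹) * (p x * p x') := by
        refine Finset.sum_le_sum fun x _ => Finset.sum_le_sum fun x' _ => ?_
        rw [← Finset.sum_mul]
        exact mul_le_mul_of_nonneg_right (count_bound r f huniv x x')
          (mul_nonneg (hp x) (hp x'))
    _ = ∑ x : ∀ l, 𝒳 l, ∑ x' : ∀ l, 𝒳 l, ∑ S : Finset L,
          (∏ l, (Fintype.card (ι l) : ℝ)) * (((2:ℝ) ^ (∑ l ∈ univ \ S, r l))⁻¹ *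
            ((if (∀ l ∈ S, x l = x' l) then (1:ℝ) else 0) * (p x * p x'))) := by
        refine Finset.sum_congr rfl fun x _ => Finset.sum_congr rfl fun x' _ => ?_
        rw [Finset.mul_sum, Finset.sum_mul]
        exact Finset.sum_congr rfl fun S _ => by ring
    _ = ∑ S : Finset L, ∑ x : ∀ l, 𝒳 l, ∑ x' : ∀ l, 𝒳 l,
          (∏ l, (Fintype.card (ι l) : ℝ)) * (((2:ℝ) ^ (∑ l ∈ univ \ S, r l))⁻¹ *
            ((if (∀ l ∈ S, x l = x' l) then (1:ℝ) else 0) * (p x * p x'))) := lhl_swap3 _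
    _ = _ := by
        rw [Finset.mul_sum]
        refine Finset.sum_congr rfl fun S _ => ?_
        rw [h3 S]
        simp only [← Finset.mul_sum]

lemma core_bound {L : Type} [Fintype L] [DecidableEq L]
    {𝒳 : L → Type} [∀ l, Fintype (𝒳 l)] {ι : L → Type} [∀ l, Fintype (ι l)]
    [∀ l, Nonempty (ι l)] [Nonempty (∀ l, 𝒳 l)] {𝒵 : Type} [Fintype 𝒵]
    (r : L → ℕ) (f : ∀ l, ι l → 𝒳 l → (Fin (r l) → Bool))
    (huniv : TwoUniversal r f)
    (q : ((∀ l, 𝒳 l) × 𝒵) → ℝ) (hq0 : ∀ ω, 0 ≤ q ω) (z : 𝒵)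
    (N M QZ : ℝ)
    (hN : N = ∏ l, (Fintype.card (ι l) : ℝ))
    (hM : M = (2:ℝ) ^ (∑ l, r l))
    (hQZ : QZ = ∑ x : ∀ l, 𝒳 l, q (x, z)) :
    ∑ k : ∀ l, Fin (r l) → Bool, ∑ g : ∀ l, ι l,
      (N⁻¹ * (∑ x : ∀ l, 𝒳 l, if (∀ l, f l (g l) (x l) = k l) then q (x, z) else 0)
        - M⁻¹ * N⁻¹ * QZ) ^ 2 / (N⁻¹ * M⁻¹ * QZ)
    ≤ ∑ S ∈ Finset.univ.filter (fun S : Finset L => S ≠ ∅),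
        M * ((2:ℝ) ^ (∑ l ∈ univ \ S, r l))⁻¹ *
          ⨆ a : ∀ i : S, 𝒳 i.1,
            ∑ x : ∀ l, 𝒳 l, if (∀ i : S, x i.1 = a i) then q (x, z) else 0 := by
  have hNpos : 0 < N := hN ▸ Finset.prod_pos fun l _ => by exact_mod_cast Fintype.card_pos
  have hMpos : 0 < M := hM ▸ by positivity
  have hqz : ∀ x : ∀ l, 𝒳 l, 0 ≤ q (x, z) := fun x => hq0 _
  have hQZ0 : 0 ≤ QZ := hQZ ▸ Finset.sum_nonneg fun x _ => hqz x
  have hanon : ∀ S : Finset L, Nonempty (∀ i : S, 𝒳 i.1) :=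
    fun S => ⟨fun i => Classical.arbitrary (∀ l, 𝒳 l) i.1⟩
  have hsupnn : ∀ S : Finset L,
      0 ≤ ⨆ a : ∀ i : S, 𝒳 i.1,
        ∑ x : ∀ l, 𝒳 l, if (∀ i : S, x i.1 = a i) then q (x, z) else 0 := by
    intro S
    haveI := hanon S
    exact lhl_sup_nonneg_helper _ fun a => Finset.sum_nonneg fun x _ => lhl_ite_nonneg (hqz x)
  have hRHSnn : 0 ≤ ∑ S ∈ Finset.univ.filter (fun S : Finset L => S ≠ ∅),
      M * ((2:ℝ) ^ (∑ l ∈ univ \ S, r l))⁻¹ *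
        ⨆ a : ∀ i : S, 𝒳 i.1,
          ∑ x : ∀ l, 𝒳 l, if (∀ i : S, x i.1 = a i) then q (x, z) else 0 := by
    refine Finset.sum_nonneg fun S _ => mul_nonneg (by positivity) (hsupnn S)
  by_cases hz : QZ = 0
  · -- degenerate case: everything vanishes
    have hq00 : ∀ x : ∀ l, 𝒳 l, q (x, z) = 0 := by
      intro x
      have h := (Finset.sum_eq_zero_iff_of_nonneg (fun x _ => hqz x)).mp (hQZ ▸ hz)
      exact h x (mem_univ x)
    have hB0 : ∀ (k : ∀ l, Fin (r l) → Bool) (g : ∀ l, ι l),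
        (∑ x : ∀ l, 𝒳 l, if (∀ l, f l (g l) (x l) = k l) then q (x, z) else 0) = 0 :=
      fun k g => Finset.sum_eq_zero fun x _ => by rw [hq00]; simp
    have hzero : ∑ k : ∀ l, Fin (r l) → Bool, ∑ g : ∀ l, ι l,
        (N⁻¹ * (∑ x : ∀ l, 𝒳 l, if (∀ l, f l (g l) (x l) = k l) then q (x, z) else 0)
          - M⁻¹ * N⁻¹ * QZ) ^ 2 / (N⁻¹ * M⁻¹ * QZ) = 0 := by
      refine Finset.sum_eq_zero fun k _ => Finset.sum_eq_zero fun g _ => ?_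
      rw [hB0, hz]
      simp
    rw [hzero]
    exact hRHSnn
  · have hQZpos : 0 < QZ := lt_of_le_of_ne hQZ0 (Ne.symm hz)
    -- cardinality facts
    have hcardK : (Fintype.card (∀ l, Fin (r l) → Bool) : ℝ) = M := by
      rw [Fintype.card_pi, hM]
      push_cast
      rw [← Finset.prod_pow_eq_pow_sum]
      refine Finset.prod_congr rfl fun l _ => ?_
      rw [Fintype.card_fun]
      push_cast
      simp
    have hcardG : (Fintype.card (∀ l, ι l) : ℝ) = N := by
      rw [Fintype.card_pi, hN]
      push_cast
      rfl
    -- row sums of B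
    have hBsum : ∀ g : ∀ l, ι l,
        ∑ k : ∀ l, Fin (r l) → Bool,
          (∑ x : ∀ l, 𝒳 l, if (∀ l, f l (g l) (x l) = k l) then q (x, z) else 0) = QZ := by
      intro g
      rw [Finset.sum_comm, hQZ]
      exact Finset.sum_congr rfl fun x _ => sum_ite_forall_eq (fun l => f l (g l) (x l)) _ _
    -- expansion of the square
    have hexp : ∀ g : ∀ l, ι l,
        ∑ k : ∀ l, Fin (r l) → Bool,
          ((∑ x : ∀ l, 𝒳 l, if (∀ l, f l (g l) (x l) = k l) then q (x, z) else 0)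
            - M⁻¹ * QZ) ^ 2
        = (∑ k : ∀ l, Fin (r l) → Bool,
            (∑ x : ∀ l, 𝒳 l, if (∀ l, f l (g l) (x l) = k l) then q (x, z) else 0) ^ 2)
          - M⁻¹ * QZ ^ 2 := by
      intro g
      have e1 : ∀ k : ∀ l, Fin (r l) → Bool,
          ((∑ x : ∀ l, 𝒳 l, if (∀ l, f l (g l) (x l) = k l) then q (x, z) else 0)
            - M⁻¹ * QZ) ^ 2
          = (∑ x : ∀ l, 𝒳 l, if (∀ l, f l (g l) (x l) = k l) then q (x, z) else 0) ^ 2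
            - (2 * (M⁻¹ * QZ)) *
              (∑ x : ∀ l, 𝒳 l, if (∀ l, f l (g l) (x l) = k l) then q (x, z) else 0)
            + (M⁻¹ * QZ) ^ 2 := fun k => by ring
      simp only [e1]
      rw [Finset.sum_add_distrib, Finset.sum_sub_distrib, ← Finset.mul_sum, hBsum g,
        Finset.sum_const, nsmul_eq_mul, Finset.card_univ, hcardK]
      field_simp
      ring
    -- collision sums
    have hcol := collision r f huniv (fun x => q (x, z)) (fun x => hqz x)
    -- the empty-set collision term
    have hempty : ((2:ℝ) ^ (∑ l ∈ univ \ (∅ : Finset L), r l))⁻¹ *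
        ∑ a : ∀ i : (∅ : Finset L), 𝒳 i.1,
          (∑ x : ∀ l, 𝒳 l, if (∀ i : (∅ : Finset L), x i.1 = a i) then q (x, z) else 0) ^ 2
        = M⁻¹ * QZ ^ 2 := by
      haveI : IsEmpty {i : L // i ∈ (∅ : Finset L)} := by
        constructor
        rintro ⟨i, hi⟩
        exact absurd hi (Finset.notMem_empty i)
      haveI : Unique (∀ i : (∅ : Finset L), 𝒳 i.1) := Pi.uniqueOfIsEmpty _
      rw [Fintype.sum_unique]
      have hc : ∀ x : ∀ l, 𝒳 l,
          (if (∀ i : (∅ : Finset L), x i.1 = (default : ∀ i : (∅ : Finset L), 𝒳 i.1) i)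
            then q (x, z) else 0) = q (x, z) :=
        fun x => if_pos fun i => isEmptyElim i
      simp only [hc]
      rw [Finset.sdiff_empty, ← hQZ, ← hM]
    -- main chain
    calc ∑ k : ∀ l, Fin (r l) → Bool, ∑ g : ∀ l, ι l,
        (N⁻¹ * (∑ x : ∀ l, 𝒳 l, if (∀ l, f l (g l) (x l) = k l) then q (x, z) else 0)
          - M⁻¹ * N⁻¹ * QZ) ^ 2 / (N⁻¹ * M⁻¹ * QZ)
        = ∑ g : ∀ l, ι l, ∑ k : ∀ l, Fin (r l) → Bool,
            (N⁻¹ * (∑ x : ∀ l, 𝒳 l, if (∀ l, f l (g l) (x l) = k l) then q (x, z) else 0)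
              - M⁻¹ * N⁻¹ * QZ) ^ 2 / (N⁻¹ * M⁻¹ * QZ) := Finset.sum_comm
      _ = ∑ g : ∀ l, ι l, ∑ k : ∀ l, Fin (r l) → Bool,
            (M * N⁻¹ / QZ) *
              ((∑ x : ∀ l, 𝒳 l, if (∀ l, f l (g l) (x l) = k l) then q (x, z) else 0)
                - M⁻¹ * QZ) ^ 2 := by
          refine Finset.sum_congr rfl fun g _ => Finset.sum_congr rfl fun k _ => ?_
          field_simp
      _ = (M * N⁻¹ / QZ) * ∑ g : ∀ l, ι l, ∑ k : ∀ l, Fin (r l) → Bool,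
            ((∑ x : ∀ l, 𝒳 l, if (∀ l, f l (g l) (x l) = k l) then q (x, z) else 0)
              - M⁻¹ * QZ) ^ 2 := by
          simp only [← Finset.mul_sum]
      _ = (M * N⁻¹ / QZ) *
            ((∑ g : ∀ l, ι l, ∑ k : ∀ l, Fin (r l) → Bool,
              (∑ x : ∀ l, 𝒳 l, if (∀ l, f l (g l) (x l) = k l) then q (x, z) else 0) ^ 2)
            - N * (M⁻¹ * QZ ^ 2)) := by
          congr 1
          rw [show (∑ g : ∀ l, ι l, ∑ k : ∀ l, Fin (r l) → Bool,
            ((∑ x : ∀ l, 𝒳 l, if (∀ l, f l (g l) (x l) = k l) then q (x, z) else 0)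
              - M⁻¹ * QZ) ^ 2)
            = ∑ g : ∀ l, ι l,
              ((∑ k : ∀ l, Fin (r l) → Bool,
                (∑ x : ∀ l, 𝒳 l, if (∀ l, f l (g l) (x l) = k l) then q (x, z) else 0) ^ 2)
              - M⁻¹ * QZ ^ 2) from Finset.sum_congr rfl fun g _ => hexp g]
          rw [Finset.sum_sub_distrib, Finset.sum_const, nsmul_eq_mul, Finset.card_univ, hcardG]
      _ ≤ (M * N⁻¹ / QZ) *
            ((N * ∑ S : Finset L, ((2:ℝ) ^ (∑ l ∈ univ \ S, r l))⁻¹ *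
              ∑ a : ∀ i : S, 𝒳 i.1,
                (∑ x : ∀ l, 𝒳 l, if (∀ i : S, x i.1 = a i) then q (x, z) else 0) ^ 2)
            - N * (M⁻¹ * QZ ^ 2)) := by
          refine mul_le_mul_of_nonneg_left (sub_le_sub_right ?_ _) (by positivity)
          rw [hN]
          exact hcol
      _ = (M * N⁻¹ / QZ) * (N * ∑ S ∈ Finset.univ.erase (∅ : Finset L),
            ((2:ℝ) ^ (∑ l ∈ univ \ S, r l))⁻¹ *
              ∑ a : ∀ i : S, 𝒳 i.1,
                (∑ x : ∀ l, 𝒳 l, if (∀ i : S, x i.1 = a i) then q (x, z) else 0) ^ 2) := by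
          congr 1
          rw [← Finset.sum_erase_add Finset.univ _ (Finset.mem_univ (∅ : Finset L)), hempty]
          ring
      _ = ∑ S ∈ Finset.univ.erase (∅ : Finset L),
            M * ((2:ℝ) ^ (∑ l ∈ univ \ S, r l))⁻¹ *
              ((∑ a : ∀ i : S, 𝒳 i.1,
                (∑ x : ∀ l, 𝒳 l, if (∀ i : S, x i.1 = a i) then q (x, z) else 0) ^ 2) / QZ) := by
          rw [Finset.mul_sum, Finset.mul_sum]
          refine Finset.sum_congr rfl fun S _ => ?_
          field_simp
      _ ≤ ∑ S ∈ Finset.univ.erase (∅ : Finset L),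
            M * ((2:ℝ) ^ (∑ l ∈ univ \ S, r l))⁻¹ *
              ⨆ a : ∀ i : S, 𝒳 i.1,
                ∑ x : ∀ l, 𝒳 l, if (∀ i : S, x i.1 = a i) then q (x, z) else 0 := by
          refine Finset.sum_le_sum fun S _ => ?_
          refine mul_le_mul_of_nonneg_left ?_ (by positivity)
          rw [div_le_iff₀ hQZpos]
          -- collision sum ≤ sup * QZ
          haveI := hanon S
          have hble : ∀ a : ∀ i : S, 𝒳 i.1,
              (∑ x : ∀ l, 𝒳 l, if (∀ i : S, x i.1 = a i) then q (x, z) else 0)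
              ≤ ⨆ b : ∀ i : S, 𝒳 i.1,
                  ∑ x : ∀ l, 𝒳 l, if (∀ i : S, x i.1 = b i) then q (x, z) else 0 :=
            lhl_sup_le_helper _
          have hmnn : ∀ a : ∀ i : S, 𝒳 i.1,
              0 ≤ ∑ x : ∀ l, 𝒳 l, if (∀ i : S, x i.1 = a i) then q (x, z) else 0 :=
            fun a => Finset.sum_nonneg fun x _ => lhl_ite_nonneg (hqz x)
          have hmarg : ∑ a : ∀ i : S, 𝒳 i.1,
              (∑ x : ∀ l, 𝒳 l, if (∀ i : S, x i.1 = a i) then q (x, z) else 0) = QZ := by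
            rw [Finset.sum_comm, hQZ]
            exact Finset.sum_congr rfl fun x _ =>
              sum_ite_forall_eq (K := {i // i ∈ S}) (β := fun i => 𝒳 i.1)
                (fun i => x i.1) _ _
          calc ∑ a : ∀ i : S, 𝒳 i.1,
              (∑ x : ∀ l, 𝒳 l, if (∀ i : S, x i.1 = a i) then q (x, z) else 0) ^ 2
              ≤ ∑ a : ∀ i : S, 𝒳 i.1,
                (⨆ b : ∀ i : S, 𝒳 i.1,
                  ∑ x : ∀ l, 𝒳 l, if (∀ i : S, x i.1 = b i) then q (x, z) else 0) *
                (∑ x : ∀ l, 𝒳 l, if (∀ i : S, x i.1 = a i) then q (x, z) else 0) := by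
                refine Finset.sum_le_sum fun a _ => ?_
                rw [sq]
                exact mul_le_mul_of_nonneg_right (hble a) (hmnn a)
            _ = _ := by rw [← Finset.mul_sum, hmarg]
      _ = _ := by
          rw [Finset.filter_ne']


/-- leftover hash lemma for concatenated hash functions, averaged over `Z`:
`V(p_{F_L(X_L),F_L,Z}, p_U ⊗ p_{U_𝓕} ⊗ p_Z) ≤ sqrt(Σ_{∅≠S⊆L} 2^{r_S - H̃_∞(X_S|Z)})`. -/
theorem statement15 {L : Type} [Fintype L] [DecidableEq L]
    {𝒳 : L → Type} [∀ l, Fintype (𝒳 l)] {ι : L → Type} [∀ l, Fintype (ι l)]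
    [∀ l, Nonempty (ι l)] {𝒵 : Type} [Fintype 𝒵]
    (r : L → ℕ) (f : ∀ l, ι l → 𝒳 l → (Fin (r l) → Bool))
    (huniv : TwoUniversal r f)
    (q : ((∀ l, 𝒳 l) × 𝒵) → ℝ) (hq : IsPMF q) :
    (∑ k : ∀ l, Fin (r l) → Bool, ∑ g : ∀ l, ι l, ∑ z : 𝒵,
        |(∏ l, (Fintype.card (ι l) : ℝ))⁻¹ *
            (∑ x : ∀ l, 𝒳 l,
              if (∀ l, f l (g l) (x l) = k l) then q (x, z) else 0)
          - ((2 : ℝ) ^ (∑ l, r l))⁻¹ * (∏ l, (Fintype.card (ι l) : ℝ))⁻¹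
              * (∑ x : ∀ l, 𝒳 l, q (x, z))|)
      ≤ Real.sqrt (∑ S ∈ Finset.univ.filter (fun S : Finset L => S ≠ ∅),
          (2 : ℝ) ^ ((∑ i ∈ S, (r i : ℝ)) - avgMinEnt q S)) := by

  classical
  have hq0 := hq.1
  have hXne : Nonempty (∀ l, 𝒳 l) := by
    by_contra h
    rw [not_nonempty_iff] at h
    have h1 := hq.2
    rw [Finset.sum_eq_zero (fun ω _ => (h.false ω.1).elim)] at h1
    norm_num at h1
  haveI := hXne
  have hNpos : (0:ℝ) < ∏ l, (Fintype.card (ι l) : ℝ) :=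
    Finset.prod_pos fun l _ => by exact_mod_cast Fintype.card_pos
  have hMpos : (0:ℝ) < (2:ℝ) ^ (∑ l, r l) := by positivity
  have hsum1 : ∑ z : 𝒵, ∑ x : ∀ l, 𝒳 l, q (x, z) = 1 := by
    rw [Finset.sum_comm, ← Fintype.sum_prod_type]
    exact hq.2
  have hcardK : (Fintype.card (∀ l, Fin (r l) → Bool) : ℝ) = (2:ℝ) ^ (∑ l, r l) := by
    rw [Fintype.card_pi]
    push_cast
    rw [← Finset.prod_pow_eq_pow_sum]
    refine Finset.prod_congr rfl fun l _ => ?_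
    rw [Fintype.card_fun]
    push_cast
    simp
  have hcardG : (Fintype.card (∀ l, ι l) : ℝ) = ∏ l, (Fintype.card (ι l) : ℝ) := by
    rw [Fintype.card_pi]
    push_cast
    rfl
  -- weights and deviations, indexed by (k, (g, z))
  have hw : ∀ j : (∀ l, Fin (r l) → Bool) × ((∀ l, ι l) × 𝒵),
      0 ≤ (∏ l, (Fintype.card (ι l) : ℝ))⁻¹ * ((2:ℝ) ^ (∑ l, r l))⁻¹ *
        (∑ x : ∀ l, 𝒳 l, q (x, j.2.2)) :=
    fun j => mul_nonneg (by positivity) (Finset.sum_nonneg fun x _ => hq0 _)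
  have h0 : ∀ j : (∀ l, Fin (r l) → Bool) × ((∀ l, ι l) × 𝒵),
      (∏ l, (Fintype.card (ι l) : ℝ))⁻¹ * ((2:ℝ) ^ (∑ l, r l))⁻¹ *
        (∑ x : ∀ l, 𝒳 l, q (x, j.2.2)) = 0 →
      (∏ l, (Fintype.card (ι l) : ℝ))⁻¹ *
        (∑ x : ∀ l, 𝒳 l, if (∀ l, f l (j.2.1 l) (x l) = j.1 l) then q (x, j.2.2) else 0)
      - ((2 : ℝ) ^ (∑ l, r l))⁻¹ * (∏ l, (Fintype.card (ι l) : ℝ))⁻¹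
          * (∑ x : ∀ l, 𝒳 l, q (x, j.2.2)) = 0 := by
    intro j hwj
    have hc : (0:ℝ) < (∏ l, (Fintype.card (ι l) : ℝ))⁻¹ * ((2:ℝ) ^ (∑ l, r l))⁻¹ := by
      positivity
    have hQZ : ∑ x : ∀ l, 𝒳 l, q (x, j.2.2) = 0 := by
      rcases mul_eq_zero.mp hwj with h | h
      · exact absurd h (ne_of_gt hc)
      · exact h
    have hq00 : ∀ x : ∀ l, 𝒳 l, q (x, j.2.2) = 0 := by
      intro x
      exact (Finset.sum_eq_zero_iff_of_nonneg (fun x _ => hq0 _)).mp hQZ x (Finset.mem_univ x)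
    have hB0 : (∑ x : ∀ l, 𝒳 l,
        if (∀ l, f l (j.2.1 l) (x l) = j.1 l) then q (x, j.2.2) else 0) = 0 :=
      Finset.sum_eq_zero fun x _ => by rw [hq00]; simp
    rw [hB0, hQZ]
    ring
  have hcs := lhl_cs_helper
    (fun j : (∀ l, Fin (r l) → Bool) × ((∀ l, ι l) × 𝒵) =>
      (∏ l, (Fintype.card (ι l) : ℝ))⁻¹ * ((2:ℝ) ^ (∑ l, r l))⁻¹ *
        (∑ x : ∀ l, 𝒳 l, q (x, j.2.2)))
    (fun j : (∀ l, Fin (r l) → Bool) × ((∀ l, ι l) × 𝒵) =>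
      (∏ l, (Fintype.card (ι l) : ℝ))⁻¹ *
        (∑ x : ∀ l, 𝒳 l, if (∀ l, f l (j.2.1 l) (x l) = j.1 l) then q (x, j.2.2) else 0)
      - ((2 : ℝ) ^ (∑ l, r l))⁻¹ * (∏ l, (Fintype.card (ι l) : ℝ))⁻¹
          * (∑ x : ∀ l, 𝒳 l, q (x, j.2.2)))
    hw h0
  -- the sum of the weights is 1
  have hsumw : ∑ j : (∀ l, Fin (r l) → Bool) × ((∀ l, ι l) × 𝒵),
      (∏ l, (Fintype.card (ι l) : ℝ))⁻¹ * ((2:ℝ) ^ (∑ l, r l))⁻¹ *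
        (∑ x : ∀ l, 𝒳 l, q (x, j.2.2)) = 1 := by
    rw [Fintype.sum_prod_type]
    have inner : ∀ k : ∀ l, Fin (r l) → Bool,
        ∑ p : (∀ l, ι l) × 𝒵,
          (∏ l, (Fintype.card (ι l) : ℝ))⁻¹ * ((2:ℝ) ^ (∑ l, r l))⁻¹ *
            (∑ x : ∀ l, 𝒳 l, q (x, p.2))
        = (Fintype.card (∀ l, ι l) : ℝ) *
            ((∏ l, (Fintype.card (ι l) : ℝ))⁻¹ * ((2:ℝ) ^ (∑ l, r l))⁻¹) := by
      intro k
      rw [Fintype.sum_prod_type]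
      have hz : ∀ g : ∀ l, ι l,
          ∑ z : 𝒵, (∏ l, (Fintype.card (ι l) : ℝ))⁻¹ * ((2:ℝ) ^ (∑ l, r l))⁻¹ *
            (∑ x : ∀ l, 𝒳 l, q (x, z))
          = (∏ l, (Fintype.card (ι l) : ℝ))⁻¹ * ((2:ℝ) ^ (∑ l, r l))⁻¹ := by
        intro g
        rw [← Finset.mul_sum, hsum1, mul_one]
      rw [Finset.sum_congr rfl fun g _ => hz g, Finset.sum_const, nsmul_eq_mul,
        Finset.card_univ]
    rw [Finset.sum_congr rfl fun k _ => inner k, Finset.sum_const, nsmul_eq_mul,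
      Finset.card_univ, hcardK, hcardG]
    field_simp
  -- the main second-moment bound
  have main2 : ∑ j : (∀ l, Fin (r l) → Bool) × ((∀ l, ι l) × 𝒵),
      ((∏ l, (Fintype.card (ι l) : ℝ))⁻¹ *
        (∑ x : ∀ l, 𝒳 l, if (∀ l, f l (j.2.1 l) (x l) = j.1 l) then q (x, j.2.2) else 0)
      - ((2 : ℝ) ^ (∑ l, r l))⁻¹ * (∏ l, (Fintype.card (ι l) : ℝ))⁻¹
          * (∑ x : ∀ l, 𝒳 l, q (x, j.2.2))) ^ 2 /
        ((∏ l, (Fintype.card (ι l) : ℝ))⁻¹ * ((2:ℝ) ^ (∑ l, r l))⁻¹ *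
          (∑ x : ∀ l, 𝒳 l, q (x, j.2.2)))
      ≤ ∑ S ∈ Finset.univ.filter (fun S : Finset L => S ≠ ∅),
          (2 : ℝ) ^ ((∑ i ∈ S, (r i : ℝ)) - avgMinEnt q S) := by
    have perS : ∀ S : Finset L,
        ((2:ℝ) ^ (∑ l, r l)) * ((2:ℝ) ^ (∑ l ∈ univ \ S, r l))⁻¹ *
          (∑ z : 𝒵, ⨆ a : ∀ i : S, 𝒳 i.1,
            ∑ x : ∀ l, 𝒳 l, if (∀ i : S, x i.1 = a i) then q (x, z) else 0)
        ≤ (2 : ℝ) ^ ((∑ i ∈ S, (r i : ℝ)) - avgMinEnt q S) := by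
      intro S
      haveI : Nonempty (∀ i : S, 𝒳 i.1) := ⟨fun i => Classical.arbitrary (∀ l, 𝒳 l) i.1⟩
      have hsupnn : ∀ z : 𝒵, 0 ≤ ⨆ a : ∀ i : S, 𝒳 i.1,
          ∑ x : ∀ l, 𝒳 l, if (∀ i : S, x i.1 = a i) then q (x, z) else 0 :=
        fun z => lhl_sup_nonneg_helper _
          (fun a => Finset.sum_nonneg fun x _ => lhl_ite_nonneg (hq0 _))
      have hs0 : 0 ≤ ∑ z : 𝒵, ⨆ a : ∀ i : S, 𝒳 i.1,
          ∑ x : ∀ l, 𝒳 l, if (∀ i : S, x i.1 = a i) then q (x, z) else 0 :=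
        Finset.sum_nonneg fun z _ => hsupnn z
      have hM2 : ((2:ℝ) ^ (∑ l, r l)) * ((2:ℝ) ^ (∑ l ∈ univ \ S, r l))⁻¹
          = (2:ℝ) ^ (∑ l ∈ S, r l) := by
        have h : ((2:ℝ) ^ (∑ l ∈ univ \ S, r l)) * (2:ℝ) ^ (∑ l ∈ S, r l)
            = (2:ℝ) ^ (∑ l, r l) := by
          rw [← pow_add, Finset.sum_sdiff (Finset.subset_univ S)]
        rw [← h]
        field_simp
      have havg : avgMinEnt q S = - Real.logb 2
          (∑ z : 𝒵, ⨆ a : ∀ i : S, 𝒳 i.1,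
            ∑ x : ∀ l, 𝒳 l, if (∀ i : S, x i.1 = a i) then q (x, z) else 0) := rfl
      calc ((2:ℝ) ^ (∑ l, r l)) * ((2:ℝ) ^ (∑ l ∈ univ \ S, r l))⁻¹ *
            (∑ z : 𝒵, ⨆ a : ∀ i : S, 𝒳 i.1,
              ∑ x : ∀ l, 𝒳 l, if (∀ i : S, x i.1 = a i) then q (x, z) else 0)
          = (2:ℝ) ^ (∑ l ∈ S, r l) *
            (∑ z : 𝒵, ⨆ a : ∀ i : S, 𝒳 i.1,
              ∑ x : ∀ l, 𝒳 l, if (∀ i : S, x i.1 = a i) then q (x, z) else 0) := by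
            rw [hM2]
        _ ≤ (2:ℝ) ^ (∑ l ∈ S, r l) *
            (2:ℝ) ^ (Real.logb 2 (∑ z : 𝒵, ⨆ a : ∀ i : S, 𝒳 i.1,
              ∑ x : ∀ l, 𝒳 l, if (∀ i : S, x i.1 = a i) then q (x, z) else 0)) :=
            mul_le_mul_of_nonneg_left (lhl_le_two_rpow_logb _ hs0) (by positivity)
        _ = (2 : ℝ) ^ ((∑ i ∈ S, (r i : ℝ)) - avgMinEnt q S) := by
            rw [havg, sub_neg_eq_add, Real.rpow_add two_pos]
            congr 1
            rw [← Real.rpow_natCast (2:ℝ) (∑ l ∈ S, r l)]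
            congr 1
            push_cast
            rfl
    calc ∑ j : (∀ l, Fin (r l) → Bool) × ((∀ l, ι l) × 𝒵),
        ((∏ l, (Fintype.card (ι l) : ℝ))⁻¹ *
          (∑ x : ∀ l, 𝒳 l, if (∀ l, f l (j.2.1 l) (x l) = j.1 l) then q (x, j.2.2) else 0)
        - ((2 : ℝ) ^ (∑ l, r l))⁻¹ * (∏ l, (Fintype.card (ι l) : ℝ))⁻¹
            * (∑ x : ∀ l, 𝒳 l, q (x, j.2.2))) ^ 2 /
          ((∏ l, (Fintype.card (ι l) : ℝ))⁻¹ * ((2:ℝ) ^ (∑ l, r l))⁻¹ *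
            (∑ x : ∀ l, 𝒳 l, q (x, j.2.2)))
        = ∑ k : ∀ l, Fin (r l) → Bool, ∑ g : ∀ l, ι l, ∑ z : 𝒵,
            ((∏ l, (Fintype.card (ι l) : ℝ))⁻¹ *
              (∑ x : ∀ l, 𝒳 l, if (∀ l, f l (g l) (x l) = k l) then q (x, z) else 0)
            - ((2 : ℝ) ^ (∑ l, r l))⁻¹ * (∏ l, (Fintype.card (ι l) : ℝ))⁻¹
                * (∑ x : ∀ l, 𝒳 l, q (x, z))) ^ 2 /
              ((∏ l, (Fintype.card (ι l) : ℝ))⁻¹ * ((2:ℝ) ^ (∑ l, r l))⁻¹ *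
                (∑ x : ∀ l, 𝒳 l, q (x, z))) := by
          rw [Fintype.sum_prod_type]
          exact Finset.sum_congr rfl fun k _ => Fintype.sum_prod_type _
      _ = ∑ z : 𝒵, ∑ k : ∀ l, Fin (r l) → Bool, ∑ g : ∀ l, ι l,
            ((∏ l, (Fintype.card (ι l) : ℝ))⁻¹ *
              (∑ x : ∀ l, 𝒳 l, if (∀ l, f l (g l) (x l) = k l) then q (x, z) else 0)
            - ((2 : ℝ) ^ (∑ l, r l))⁻¹ * (∏ l, (Fintype.card (ι l) : ℝ))⁻¹
                * (∑ x : ∀ l, 𝒳 l, q (x, z))) ^ 2 /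
              ((∏ l, (Fintype.card (ι l) : ℝ))⁻¹ * ((2:ℝ) ^ (∑ l, r l))⁻¹ *
                (∑ x : ∀ l, 𝒳 l, q (x, z))) := lhl_swap3 _
      _ ≤ ∑ z : 𝒵, ∑ S ∈ Finset.univ.filter (fun S : Finset L => S ≠ ∅),
            ((2:ℝ) ^ (∑ l, r l)) * ((2:ℝ) ^ (∑ l ∈ univ \ S, r l))⁻¹ *
              ⨆ a : ∀ i : S, 𝒳 i.1,
                ∑ x : ∀ l, 𝒳 l, if (∀ i : S, x i.1 = a i) then q (x, z) else 0 := by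
          refine Finset.sum_le_sum fun z _ => ?_
          have hcb := core_bound r f huniv q hq0 z
            (∏ l, (Fintype.card (ι l) : ℝ)) ((2:ℝ) ^ (∑ l, r l))
            (∑ x : ∀ l, 𝒳 l, q (x, z)) rfl rfl rfl
          calc ∑ k : ∀ l, Fin (r l) → Bool, ∑ g : ∀ l, ι l,
              ((∏ l, (Fintype.card (ι l) : ℝ))⁻¹ *
                (∑ x : ∀ l, 𝒳 l, if (∀ l, f l (g l) (x l) = k l) then q (x, z) else 0)
              - ((2 : ℝ) ^ (∑ l, r l))⁻¹ * (∏ l, (Fintype.card (ι l) : ℝ))⁻¹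
                  * (∑ x : ∀ l, 𝒳 l, q (x, z))) ^ 2 /
                ((∏ l, (Fintype.card (ι l) : ℝ))⁻¹ * ((2:ℝ) ^ (∑ l, r l))⁻¹ *
                  (∑ x : ∀ l, 𝒳 l, q (x, z)))
              = ∑ k : ∀ l, Fin (r l) → Bool, ∑ g : ∀ l, ι l,
                ((∏ l, (Fintype.card (ι l) : ℝ))⁻¹ *
                  (∑ x : ∀ l, 𝒳 l, if (∀ l, f l (g l) (x l) = k l) then q (x, z) else 0)
                - ((2 : ℝ) ^ (∑ l, r l))⁻¹ * (∏ l, (Fintype.card (ι l) : ℝ))⁻¹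
                    * (∑ x : ∀ l, 𝒳 l, q (x, z))) ^ 2 /
                  ((∏ l, (Fintype.card (ι l) : ℝ))⁻¹ * ((2:ℝ) ^ (∑ l, r l))⁻¹ *
                    (∑ x : ∀ l, 𝒳 l, q (x, z))) := rfl
            _ ≤ _ := by
                refine le_trans (le_of_eq ?_) hcb
                refine Finset.sum_congr rfl fun k _ => Finset.sum_congr rfl fun g _ => ?_
                ring_nf
      _ = ∑ S ∈ Finset.univ.filter (fun S : Finset L => S ≠ ∅),
            ((2:ℝ) ^ (∑ l, r l)) * ((2:ℝ) ^ (∑ l ∈ univ \ S, r l))⁻¹ *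
              ∑ z : 𝒵, ⨆ a : ∀ i : S, 𝒳 i.1,
                ∑ x : ∀ l, 𝒳 l, if (∀ i : S, x i.1 = a i) then q (x, z) else 0 := by
          rw [Finset.sum_comm]
          exact Finset.sum_congr rfl fun S _ => by rw [Finset.mul_sum]
      _ ≤ _ := Finset.sum_le_sum fun S _ => perS S
  -- put everything together
  calc (∑ k : ∀ l, Fin (r l) → Bool, ∑ g : ∀ l, ι l, ∑ z : 𝒵,
        |(∏ l, (Fintype.card (ι l) : ℝ))⁻¹ *
            (∑ x : ∀ l, 𝒳 l,
              if (∀ l, f l (g l) (x l) = k l) then q (x, z) else 0)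
          - ((2 : ℝ) ^ (∑ l, r l))⁻¹ * (∏ l, (Fintype.card (ι l) : ℝ))⁻¹
              * (∑ x : ∀ l, 𝒳 l, q (x, z))|)
      = ∑ j : (∀ l, Fin (r l) → Bool) × ((∀ l, ι l) × 𝒵),
          |(∏ l, (Fintype.card (ι l) : ℝ))⁻¹ *
            (∑ x : ∀ l, 𝒳 l, if (∀ l, f l (j.2.1 l) (x l) = j.1 l) then q (x, j.2.2) else 0)
          - ((2 : ℝ) ^ (∑ l, r l))⁻¹ * (∏ l, (Fintype.card (ι l) : ℝ))⁻¹
              * (∑ x : ∀ l, 𝒳 l, q (x, j.2.2))| := by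
        refine Eq.symm ?_
        rw [Fintype.sum_prod_type]
        exact Finset.sum_congr rfl fun k _ => Fintype.sum_prod_type _
    _ ≤ Real.sqrt ((∑ j : (∀ l, Fin (r l) → Bool) × ((∀ l, ι l) × 𝒵),
          (∏ l, (Fintype.card (ι l) : ℝ))⁻¹ * ((2:ℝ) ^ (∑ l, r l))⁻¹ *
            (∑ x : ∀ l, 𝒳 l, q (x, j.2.2))) *
        (∑ j : (∀ l, Fin (r l) → Bool) × ((∀ l, ι l) × 𝒵),
          ((∏ l, (Fintype.card (ι l) : ℝ))⁻¹ *
            (∑ x : ∀ l, 𝒳 l, if (∀ l, f l (j.2.1 l) (x l) = j.1 l) then q (x, j.2.2) else 0)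
          - ((2 : ℝ) ^ (∑ l, r l))⁻¹ * (∏ l, (Fintype.card (ι l) : ℝ))⁻¹
              * (∑ x : ∀ l, 𝒳 l, q (x, j.2.2))) ^ 2 /
            ((∏ l, (Fintype.card (ι l) : ℝ))⁻¹ * ((2:ℝ) ^ (∑ l, r l))⁻¹ *
              (∑ x : ∀ l, 𝒳 l, q (x, j.2.2))))) := hcs
    _ ≤ _ := by
        refine Real.sqrt_le_sqrt ?_
        rw [hsumw, one_mul]
        exact main2
end
end

section
/- Under the Markov assumption X_S − X_0 − X_T for disjoint S,T ⊆ L, for any fixed S ⊂ L the set function w : 2^S → ℝ, T ↦ I(X_T; X_0 | X_{L\S}), is submodular: w(U∪V) + w(U∩V) ≤ w(U) + w(V) for all U,V ⊆ S. -/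
noncomputable section
open Finset
open scoped Classical BigOperators

/-- Probability of an event under a pmf on a finite sample space. -/
def Pr {Ω : Type} [Fintype Ω] (p : Ω → ℝ) (E : Ω → Prop) : ℝ :=
  ∑ ω : Ω, if E ω then p ω else 0

/-- Shannon entropy of a finitely-valued random variable `X` under pmf `p`. -/
def ent {Ω α : Type} [Fintype Ω] [Fintype α] (p : Ω → ℝ) (X : Ω → α) : ℝ :=
  -∑ a : α, Pr p (fun ω => X ω = a) * Real.log (Pr p (fun ω => X ω = a))

/-- Conditional Shannon entropy `H(X|Y)`. -/
def condEnt {Ω α β : Type} [Fintype Ω] [Fintype α] [Fintype β]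
    (p : Ω → ℝ) (X : Ω → α) (Y : Ω → β) : ℝ :=
  ent p (fun ω => (X ω, Y ω)) - ent p Y

/-- Mutual information `I(X;Y)`. -/
def mi {Ω α β : Type} [Fintype Ω] [Fintype α] [Fintype β]
    (p : Ω → ℝ) (X : Ω → α) (Y : Ω → β) : ℝ :=
  ent p X + ent p Y - ent p (fun ω => (X ω, Y ω))

/-- Conditional mutual information `I(X;Y|Z)`. -/
def cmi {Ω α β γ : Type} [Fintype Ω] [Fintype α] [Fintype β] [Fintype γ]
    (p : Ω → ℝ) (X : Ω → α) (Y : Ω → β) (Z : Ω → γ) : ℝ :=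
  ent p (fun ω => (X ω, Z ω)) + ent p (fun ω => (Y ω, Z ω))
    - ent p (fun ω => (X ω, Y ω, Z ω)) - ent p Z

/-- `X` and `Y` are conditionally independent given `Z` (Markov chain `X - Z - Y`). -/
def CondIndep {Ω α β γ : Type} [Fintype Ω] [Fintype α] [Fintype β] [Fintype γ]
    (p : Ω → ℝ) (X : Ω → α) (Y : Ω → β) (Z : Ω → γ) : Prop :=
  ∀ (a : α) (b : β) (c : γ),
    Pr p (fun ω => X ω = a ∧ Y ω = b ∧ Z ω = c) * Pr p (fun ω => Z ω = c)
      = Pr p (fun ω => X ω = a ∧ Z ω = c) * Pr p (fun ω => Y ω = b ∧ Z ω = c)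

/-- The tuple random variable `X_S = (X_l)_{l ∈ S}`. -/
def XS {Ω L 𝒳 : Type} [Fintype Ω] (X : L → Ω → 𝒳) (S : Finset L) :
    Ω → (S → 𝒳) :=
  fun ω i => X i ω

/-- The value function of the secret-key generation game:
`v(S) = I(X_S; X_0 | X_{L\S})`. -/
def vGame {Ω L 𝒳 β : Type} [Fintype Ω] [Fintype L] [DecidableEq L] [Fintype 𝒳] [Fintype β]
    (p : Ω → ℝ) (X : L → Ω → 𝒳) (X0 : Ω → β) (S : Finset L) : ℝ :=
  cmi p (XS X S) X0 (XS X Sᶜ)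


section BasicPr
variable {Ω α β γ : Type} [Fintype Ω] [Fintype α] [Fintype β] [Fintype γ]

lemma Pr_nonneg (p : Ω → ℝ) (hp : ∀ ω, 0 ≤ p ω) (E : Ω → Prop) : 0 ≤ Pr p E := by
  refine Finset.sum_nonneg fun ω _ => ?_
  split <;> simp [hp ω]

lemma Pr_congr (p : Ω → ℝ) {E F : Ω → Prop} (h : ∀ ω, E ω ↔ F ω) : Pr p E = Pr p F :=
  Finset.sum_congr rfl fun ω _ => if_congr (h ω) rfl rfl

lemma Pr_mono (p : Ω → ℝ) (hp : ∀ ω, 0 ≤ p ω) {E F : Ω → Prop} (h : ∀ ω, E ω → F ω) :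
    Pr p E ≤ Pr p F := by
  refine Finset.sum_le_sum fun ω _ => ?_
  by_cases hE : E ω
  · simp [hE, h ω hE]
  · simp only [hE, if_false]
    split <;> simp [hp ω]

lemma le_Pr (p : Ω → ℝ) (hp : ∀ ω, 0 ≤ p ω) {E : Ω → Prop} (ω₀ : Ω) (hE : E ω₀) :
    p ω₀ ≤ Pr p E := by
  have h := Finset.single_le_sum (f := fun ω => if E ω then p ω else 0)
    (fun ω _ => by split <;> simp [hp ω]) (Finset.mem_univ ω₀)
  simpa [hE, Pr] using h

lemma Pr_fiber_sum (p : Ω → ℝ) (E : Ω → Prop) (W : Ω → α) :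
    Pr p E = ∑ a : α, Pr p (fun ω => E ω ∧ W ω = a) := by
  unfold Pr
  rw [Finset.sum_comm]
  refine Finset.sum_congr rfl fun ω _ => ?_
  by_cases hE : E ω <;> simp [hE, Finset.sum_ite_eq]

lemma sum_fiber (p : Ω → ℝ) (F : Ω → α) (G : α → ℝ) :
    ∑ a : α, Pr p (fun ω => F ω = a) * G a = ∑ ω : Ω, p ω * G (F ω) := by
  unfold Pr
  simp_rw [Finset.sum_mul, ite_mul, zero_mul]
  rw [Finset.sum_comm]
  refine Finset.sum_congr rfl fun ω _ => ?_
  simp [Finset.sum_ite_eq]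

lemma ent_comp_inj (p : Ω → ℝ) (X : Ω → α) {f : α → γ} (hf : Function.Injective f) :
    ent p (fun ω => f (X ω)) = ent p X := by
  unfold ent
  congr 1
  rw [← Finset.sum_subset (Finset.subset_univ (Finset.image f Finset.univ))]
  · rw [Finset.sum_image (fun a _ a' _ h => hf h)]
    refine Finset.sum_congr rfl fun a _ => ?_
    rw [Pr_congr p (fun ω => hf.eq_iff (a := X ω) (b := a))]
  · intro b _ hb
    have h0 : Pr p (fun ω => f (X ω) = b) = 0 := by
      have : ∀ ω, ¬ (f (X ω) = b) := fun ω h =>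
        hb (Finset.mem_image.mpr ⟨X ω, Finset.mem_univ _, h⟩)
      simp [Pr, this]
    simp [h0]

lemma ent_omega (p : Ω → ℝ) (W : Ω → α) :
    ent p W = -∑ ω : Ω, p ω * Real.log (Pr p (fun ω' => W ω' = W ω)) := by
  unfold ent
  congr 1
  exact sum_fiber p W (fun a => Real.log (Pr p (fun ω' => W ω' = a)))

end BasicPr
section CMI
variable {Ω α β γ : Type} [Fintype Ω] [Fintype α] [Fintype β] [Fintype γ]

lemma cmi_omega (p : Ω → ℝ) (X : Ω → α) (Y : Ω → β) (Z : Ω → γ) :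
    cmi p X Y Z = ∑ ω : Ω, p ω *
      (Real.log (Pr p (fun ω' => X ω' = X ω ∧ Y ω' = Y ω ∧ Z ω' = Z ω))
        + Real.log (Pr p (fun ω' => Z ω' = Z ω))
        - Real.log (Pr p (fun ω' => X ω' = X ω ∧ Z ω' = Z ω))
        - Real.log (Pr p (fun ω' => Y ω' = Y ω ∧ Z ω' = Z ω))) := by
  unfold cmi
  rw [ent_omega p (fun ω => (X ω, Z ω)), ent_omega p (fun ω => (Y ω, Z ω)),
      ent_omega p (fun ω => (X ω, Y ω, Z ω)), ent_omega p Z]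
  simp only [Prod.mk.injEq, mul_add, mul_sub]
  rw [Finset.sum_sub_distrib, Finset.sum_sub_distrib, Finset.sum_add_distrib]
  ring

lemma cmi_nonneg (p : Ω → ℝ) (hp : IsPMF p) (X : Ω → α) (Y : Ω → β) (Z : Ω → γ) :
    0 ≤ cmi p X Y Z := by
  obtain ⟨hp0, hp1⟩ := hp
  set q : Ω → ℝ := fun ω => Pr p (fun ω' => X ω' = X ω ∧ Y ω' = Y ω ∧ Z ω' = Z ω) with hq
  set r : Ω → ℝ := fun ω => Pr p (fun ω' => X ω' = X ω ∧ Z ω' = Z ω) with hr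
  set s : Ω → ℝ := fun ω => Pr p (fun ω' => Y ω' = Y ω ∧ Z ω' = Z ω) with hs
  set t : Ω → ℝ := fun ω => Pr p (fun ω' => Z ω' = Z ω) with ht
  rw [cmi_omega]
  -- pointwise bound
  have step1 : ∀ ω : Ω, p ω * (1 - (r ω * s ω) / (q ω * t ω)) ≤
      p ω * (Real.log (q ω) + Real.log (t ω) - Real.log (r ω) - Real.log (s ω)) := by
    intro ω
    by_cases hω : p ω = 0
    · simp [hω]
    have hpω : 0 < p ω := lt_of_le_of_ne (hp0 ω) (Ne.symm hω)
    have hqω : 0 < q ω := lt_of_lt_of_le hpω (le_Pr p hp0 ω ⟨rfl, rfl, rfl⟩)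
    have hrω : 0 < r ω := lt_of_lt_of_le hpω (le_Pr p hp0 ω ⟨rfl, rfl⟩)
    have hsω : 0 < s ω := lt_of_lt_of_le hpω (le_Pr p hp0 ω ⟨rfl, rfl⟩)
    have htω : 0 < t ω := lt_of_lt_of_le hpω (le_Pr p hp0 ω rfl)
    have hx : 0 < (r ω * s ω) / (q ω * t ω) := by positivity
    have hlog : Real.log ((r ω * s ω) / (q ω * t ω)) ≤ (r ω * s ω) / (q ω * t ω) - 1 :=
      Real.log_le_sub_one_of_pos hx
    have hsplit : Real.log ((r ω * s ω) / (q ω * t ω)) =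
        Real.log (r ω) + Real.log (s ω) - (Real.log (q ω) + Real.log (t ω)) := by
      rw [Real.log_div (by positivity) (by positivity), Real.log_mul hrω.ne' hsω.ne',
        Real.log_mul hqω.ne' htω.ne']
    rw [hsplit] at hlog
    have := mul_le_mul_of_nonneg_left (by linarith : 1 - (r ω * s ω) / (q ω * t ω) ≤
      Real.log (q ω) + Real.log (t ω) - Real.log (r ω) - Real.log (s ω)) (le_of_lt hpω)
    linarith
  have step2 : ∑ ω : Ω, p ω * (1 - (r ω * s ω) / (q ω * t ω)) ≤
      ∑ ω : Ω, p ω * (Real.log (q ω) + Real.log (t ω) - Real.log (r ω) - Real.log (s ω)) :=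
    Finset.sum_le_sum fun ω _ => step1 ω
  refine le_trans ?_ step2
  -- need: 0 ≤ ∑ p ω (1 - rs/qt), i.e. M ≤ 1
  have expand : ∑ ω : Ω, p ω * (1 - (r ω * s ω) / (q ω * t ω)) =
      1 - ∑ ω : Ω, p ω * ((r ω * s ω) / (q ω * t ω)) := by
    simp only [mul_sub, mul_one]
    rw [Finset.sum_sub_distrib, hp1]
  rw [expand, sub_nonneg]
  -- group by value of (X,Y,Z)
  set Q : α × β × γ → ℝ := fun v => Pr p (fun ω => X ω = v.1 ∧ Y ω = v.2.1 ∧ Z ω = v.2.2) with hQ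
  set R : α → γ → ℝ := fun x z => Pr p (fun ω => X ω = x ∧ Z ω = z) with hR
  set Sf : β → γ → ℝ := fun y z => Pr p (fun ω => Y ω = y ∧ Z ω = z) with hSf
  set T : γ → ℝ := fun z => Pr p (fun ω => Z ω = z) with hT
  set G : α × β × γ → ℝ := fun v => (R v.1 v.2.2 * Sf v.2.1 v.2.2) / (Q v * T v.2.2) with hG
  have hgroup : ∑ ω : Ω, p ω * ((r ω * s ω) / (q ω * t ω)) =
      ∑ v : α × β × γ, Q v * G v := by
    have := sum_fiber p (fun ω => (X ω, Y ω, Z ω)) G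
    rw [← this]
    refine Finset.sum_congr rfl fun v _ => ?_
    congr 1
    exact Pr_congr p fun ω => by simp [Prod.ext_iff]
  rw [hgroup]
  have step3 : ∑ v : α × β × γ, Q v * G v ≤
      ∑ v : α × β × γ, (R v.1 v.2.2 * Sf v.2.1 v.2.2) / T v.2.2 := by
    refine Finset.sum_le_sum fun v _ => ?_
    by_cases hQv : Q v = 0
    · rw [hQv, zero_mul]
      have h1 : 0 ≤ R v.1 v.2.2 := Pr_nonneg p hp0 _
      have h2 : 0 ≤ Sf v.2.1 v.2.2 := Pr_nonneg p hp0 _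
      have h3 : 0 ≤ T v.2.2 := Pr_nonneg p hp0 _
      positivity
    by_cases hTv : T v.2.2 = 0
    · simp [hG, hTv]
    refine le_of_eq ?_
    rw [hG]
    field_simp
  have hmargR : ∀ z : γ, ∑ x : α, R x z = T z := by
    intro z
    simp only [hR, hT]
    rw [Pr_fiber_sum p (fun ω => Z ω = z) X]
    exact Finset.sum_congr rfl fun x _ => Pr_congr p fun ω => and_comm
  have hmargS : ∀ z : γ, ∑ y : β, Sf y z = T z := by
    intro z
    simp only [hSf, hT]
    rw [Pr_fiber_sum p (fun ω => Z ω = z) Y]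
    exact Finset.sum_congr rfl fun y _ => Pr_congr p fun ω => and_comm
  have hTsum : ∑ z : γ, T z = 1 := by
    simp only [hT]
    have h2 : ∑ z : γ, Pr p (fun ω => Z ω = z) = ∑ z : γ, Pr p (fun ω => True ∧ Z ω = z) :=
      Finset.sum_congr rfl fun z _ => Pr_congr p fun ω => by simp
    rw [h2, ← Pr_fiber_sum p (fun _ => True) Z]
    simp [Pr, hp1]
  have reorg : ∑ v : α × β × γ, (R v.1 v.2.2 * Sf v.2.1 v.2.2) / T v.2.2 =
      ∑ z : γ, (∑ x : α, R x z) * (∑ y : β, Sf y z) / T z := by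
    rw [Fintype.sum_prod_type]
    simp_rw [Fintype.sum_prod_type]
    rw [Finset.sum_congr rfl (fun x _ => Finset.sum_comm (s := Finset.univ) (t := Finset.univ)
      (f := fun y z => R x z * Sf y z / T z)), Finset.sum_comm]
    refine Finset.sum_congr rfl fun z _ => ?_
    rw [Finset.sum_mul_sum]
    simp_rw [Finset.sum_div]
  refine le_trans step3 ?_
  rw [reorg]
  have final : ∑ z : γ, (∑ x : α, R x z) * (∑ y : β, Sf y z) / T z ≤ ∑ z : γ, T z := by
    refine Finset.sum_le_sum fun z _ => ?_
    rw [hmargR z, hmargS z]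
    by_cases hTz : T z = 0
    · simp [hTz]
    · rw [mul_div_assoc, div_self hTz, mul_one]
  rw [hTsum] at final
  exact final

lemma cmi_eq_zero (p : Ω → ℝ) (hp : IsPMF p) (X : Ω → α) (Y : Ω → β) (Z : Ω → γ)
    (h : ∀ (a : α) (b : β) (c : γ),
      Pr p (fun ω => X ω = a ∧ Y ω = b ∧ Z ω = c) * Pr p (fun ω => Z ω = c)
        = Pr p (fun ω => X ω = a ∧ Z ω = c) * Pr p (fun ω => Y ω = b ∧ Z ω = c)) :
    cmi p X Y Z = 0 := by
  obtain ⟨hp0, _⟩ := hp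
  rw [cmi_omega]
  refine Finset.sum_eq_zero fun ω _ => ?_
  by_cases hω : p ω = 0
  · simp [hω]
  have hpω : 0 < p ω := lt_of_le_of_ne (hp0 ω) (Ne.symm hω)
  set q : ℝ := Pr p (fun ω' => X ω' = X ω ∧ Y ω' = Y ω ∧ Z ω' = Z ω) with hqd
  set r : ℝ := Pr p (fun ω' => X ω' = X ω ∧ Z ω' = Z ω) with hrd
  set s : ℝ := Pr p (fun ω' => Y ω' = Y ω ∧ Z ω' = Z ω) with hsd
  set t : ℝ := Pr p (fun ω' => Z ω' = Z ω) with htd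
  have key : q * t = r * s := h (X ω) (Y ω) (Z ω)
  have hqω : 0 < q := lt_of_lt_of_le hpω (le_Pr p hp0 ω ⟨rfl, rfl, rfl⟩)
  have htω : 0 < t := lt_of_lt_of_le hpω (le_Pr p hp0 ω rfl)
  have hrs : 0 < r * s := key ▸ mul_pos hqω htω
  have hr0 : 0 ≤ r := Pr_nonneg p hp0 _
  have hs0 : 0 ≤ s := Pr_nonneg p hp0 _
  have hrω : 0 < r := by
    rcases hr0.lt_or_eq with h' | h'
    · exact h'
    · exfalso; rw [← h', zero_mul] at hrs; exact lt_irrefl 0 hrs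
  have hsω : 0 < s := by
    rcases hs0.lt_or_eq with h' | h'
    · exact h'
    · exfalso; rw [← h', mul_zero] at hrs; exact lt_irrefl 0 hrs
  have hlogs : Real.log q + Real.log t = Real.log r + Real.log s := by
    rw [← Real.log_mul hqω.ne' htω.ne', ← Real.log_mul hrω.ne' hsω.ne', key]
  have : Real.log q + Real.log t - Real.log r - Real.log s = 0 := by linarith
  rw [this, mul_zero]

end CMI

section Tuples
variable {Ω L 𝒳 β : Type} [Fintype Ω] [Fintype L] [DecidableEq L] [Fintype 𝒳] [Fintype β]

lemma ent_pair_union (p : Ω → ℝ) (X : L → Ω → 𝒳) (A B : Finset L) :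
    ent p (fun ω => (XS X A ω, XS X B ω)) = ent p (XS X (A ∪ B)) := by
  refine ent_comp_inj p (XS X (A ∪ B))
    (f := fun g => ((fun i : A => g ⟨i.1, Finset.mem_union_left _ i.2⟩),
                    (fun i : B => g ⟨i.1, Finset.mem_union_right _ i.2⟩))) ?_
  intro g g' h
  funext i
  rcases Finset.mem_union.mp i.2 with hA | hB
  · exact congrFun (congrArg Prod.fst h) ⟨i.1, hA⟩
  · exact congrFun (congrArg Prod.snd h) ⟨i.1, hB⟩

lemma ent_swap_X0 (p : Ω → ℝ) (X : L → Ω → 𝒳) (X0 : Ω → β) (B : Finset L) :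
    ent p (fun ω => (X0 ω, XS X B ω)) = ent p (fun ω => (XS X B ω, X0 ω)) :=
  ent_comp_inj p (fun ω => (XS X B ω, X0 ω)) (f := Prod.swap) Prod.swap_injective

lemma ent_pair_XS_X0 (p : Ω → ℝ) (X : L → Ω → 𝒳) (X0 : Ω → β) (A B : Finset L) :
    ent p (fun ω => (XS X A ω, (X0 ω, XS X B ω)))
      = ent p (fun ω => (XS X (A ∪ B) ω, X0 ω)) := by
  refine ent_comp_inj p (fun ω => (XS X (A ∪ B) ω, X0 ω))
    (f := fun g => ((fun i : A => g.1 ⟨i.1, Finset.mem_union_left _ i.2⟩),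
      (g.2, (fun i : B => g.1 ⟨i.1, Finset.mem_union_right _ i.2⟩)))) ?_
  intro g g' h
  have h0 : g.2 = g'.2 := congrArg (fun z => z.2.1) h
  have h1 : ∀ i : A, g.1 ⟨i.1, Finset.mem_union_left _ i.2⟩
      = g'.1 ⟨i.1, Finset.mem_union_left _ i.2⟩ := fun i => congrFun (congrArg Prod.fst h) i
  have h2 : ∀ i : B, g.1 ⟨i.1, Finset.mem_union_right _ i.2⟩
      = g'.1 ⟨i.1, Finset.mem_union_right _ i.2⟩ :=
    fun i => congrFun (congrArg (fun z => z.2.2) h) i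
  refine Prod.ext ?_ h0
  funext i
  rcases Finset.mem_union.mp i.2 with hA | hB
  · exact h1 ⟨i.1, hA⟩
  · exact h2 ⟨i.1, hB⟩

lemma ent_triple_XS (p : Ω → ℝ) (X : L → Ω → 𝒳) (A D B : Finset L) :
    ent p (fun ω => (XS X A ω, (XS X D ω, XS X B ω)))
      = ent p (XS X (A ∪ (D ∪ B))) := by
  refine ent_comp_inj p (XS X (A ∪ (D ∪ B)))
    (f := fun g => ((fun i : A => g ⟨i.1, Finset.mem_union_left _ i.2⟩),
      ((fun i : D => g ⟨i.1, Finset.mem_union_right _ (Finset.mem_union_left _ i.2)⟩),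
       (fun i : B => g ⟨i.1, Finset.mem_union_right _ (Finset.mem_union_right _ i.2)⟩)))) ?_
  intro g g' h
  funext i
  rcases Finset.mem_union.mp i.2 with hA | hDB
  · exact congrFun (congrArg Prod.fst h) ⟨i.1, hA⟩
  rcases Finset.mem_union.mp hDB with hD | hB
  · exact congrFun (congrArg (fun z => z.2.1) h) ⟨i.1, hD⟩
  · exact congrFun (congrArg (fun z => z.2.2) h) ⟨i.1, hB⟩

lemma ent_triple_XS_X0 (p : Ω → ℝ) (X : L → Ω → 𝒳) (X0 : Ω → β) (A D B : Finset L) :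
    ent p (fun ω => (XS X A ω, (XS X D ω, (X0 ω, XS X B ω))))
      = ent p (fun ω => (XS X (A ∪ (D ∪ B)) ω, X0 ω)) := by
  refine ent_comp_inj p (fun ω => (XS X (A ∪ (D ∪ B)) ω, X0 ω))
    (f := fun g => ((fun i : A => g.1 ⟨i.1, Finset.mem_union_left _ i.2⟩),
      ((fun i : D => g.1 ⟨i.1, Finset.mem_union_right _ (Finset.mem_union_left _ i.2)⟩),
       (g.2, (fun i : B => g.1 ⟨i.1, Finset.mem_union_right _ (Finset.mem_union_right _ i.2)⟩))))) ?_
  intro g g' h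
  refine Prod.ext ?_ (congrArg (fun z => z.2.2.1) h)
  funext i
  rcases Finset.mem_union.mp i.2 with hA | hDB
  · exact congrFun (congrArg Prod.fst h) ⟨i.1, hA⟩
  rcases Finset.mem_union.mp hDB with hD | hB
  · exact congrFun (congrArg (fun z => z.2.1) h) ⟨i.1, hD⟩
  · exact congrFun (congrArg (fun z => z.2.2.2) h) ⟨i.1, hB⟩

lemma cmi_XS_X0 (p : Ω → ℝ) (X : L → Ω → 𝒳) (X0 : Ω → β) (T B : Finset L) :
    cmi p (XS X T) X0 (XS X B)
      = ent p (XS X (T ∪ B)) + ent p (fun ω => (XS X B ω, X0 ω))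
        - ent p (fun ω => (XS X (T ∪ B) ω, X0 ω)) - ent p (XS X B) := by
  unfold cmi
  rw [ent_pair_union p X T B, ent_swap_X0 p X X0 B, ent_pair_XS_X0 p X X0 T B]

lemma cmi_XS_XS (p : Ω → ℝ) (X : L → Ω → 𝒳) (A D C : Finset L) :
    cmi p (XS X A) (XS X D) (XS X C)
      = ent p (XS X (A ∪ C)) + ent p (XS X (D ∪ C))
        - ent p (XS X (A ∪ (D ∪ C))) - ent p (XS X C) := by
  unfold cmi
  rw [ent_pair_union p X A C, ent_pair_union p X D C, ent_triple_XS p X A D C]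

lemma cmi_XS_XS_X0 (p : Ω → ℝ) (X : L → Ω → 𝒳) (X0 : Ω → β) (A D C : Finset L) :
    cmi p (XS X A) (XS X D) (fun ω => (X0 ω, XS X C ω))
      = ent p (fun ω => (XS X (A ∪ C) ω, X0 ω)) + ent p (fun ω => (XS X (D ∪ C) ω, X0 ω))
        - ent p (fun ω => (XS X (A ∪ (D ∪ C)) ω, X0 ω)) - ent p (fun ω => (XS X C ω, X0 ω)) := by
  unfold cmi
  rw [ent_pair_XS_X0 p X X0 A C, ent_pair_XS_X0 p X X0 D C, ent_triple_XS_X0 p X X0 A D C,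
    ent_swap_X0 p X X0 C]

end Tuples

section Markov
variable {Ω L 𝒳 β : Type} [Fintype Ω] [Fintype L] [DecidableEq L] [Fintype 𝒳] [Fintype β]

/-- Glue two partial assignments on disjoint finsets. -/
def glue {C D : Finset L} (c : C → 𝒳) (d : D → 𝒳) : ((C ∪ D : Finset L)) → 𝒳 :=
  fun i => if h : i.1 ∈ C then c ⟨i.1, h⟩ else d ⟨i.1, (Finset.mem_union.mp i.2).resolve_left h⟩

lemma XS_union_glue {C D : Finset L} (hCD : Disjoint C D) (X : L → Ω → 𝒳)
    (c : C → 𝒳) (d : D → 𝒳) (ω : Ω) :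
    XS X (C ∪ D) ω = glue c d ↔ (XS X C ω = c ∧ XS X D ω = d) := by
  constructor
  · intro h
    constructor
    · funext i
      have hh := congrFun h ⟨i.1, Finset.mem_union_left D i.2⟩
      simpa [XS, glue, i.2] using hh
    · funext i
      have hni : i.1 ∉ C := Finset.disjoint_right.mp hCD i.2
      have hh := congrFun h ⟨i.1, Finset.mem_union_right C i.2⟩
      simpa [XS, glue, hni] using hh
  · rintro ⟨h1, h2⟩
    funext i
    rcases Finset.mem_union.mp i.2 with h | h
    · have hh := congrFun h1 ⟨i.1, h⟩
      simpa [XS, glue, h] using hh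
    · have hni : i.1 ∉ C := Finset.disjoint_right.mp hCD h
      have hh := congrFun h2 ⟨i.1, h⟩
      simpa [XS, glue, hni] using hh

lemma key_ci (p : Ω → ℝ) (hp : IsPMF p) (X : L → Ω → 𝒳) (X0 : Ω → β)
    (hM : ∀ S T : Finset L, Disjoint S T → CondIndep p (XS X S) (XS X T) X0)
    (A C D : Finset L) (hAC : Disjoint A C) (hAD : Disjoint A D) (hCD : Disjoint C D) :
    ∀ (a : A → 𝒳) (d : D → 𝒳) (c : β × (C → 𝒳)),
      Pr p (fun ω => XS X A ω = a ∧ XS X D ω = d ∧ (X0 ω, XS X C ω) = c)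
          * Pr p (fun ω => (X0 ω, XS X C ω) = c)
        = Pr p (fun ω => XS X A ω = a ∧ (X0 ω, XS X C ω) = c)
          * Pr p (fun ω => XS X D ω = d ∧ (X0 ω, XS X C ω) = c) := by
  rintro a d ⟨x0, cv⟩
  obtain ⟨hp0, _⟩ := hp
  -- canonical probabilities
  set Pacdx : ℝ := Pr p (fun ω => XS X A ω = a ∧ XS X C ω = cv ∧ XS X D ω = d ∧ X0 ω = x0)
    with hPacdx
  set Pacx : ℝ := Pr p (fun ω => XS X A ω = a ∧ XS X C ω = cv ∧ X0 ω = x0) with hPacx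
  set Pcdx : ℝ := Pr p (fun ω => XS X C ω = cv ∧ XS X D ω = d ∧ X0 ω = x0) with hPcdx
  set Pcx : ℝ := Pr p (fun ω => XS X C ω = cv ∧ X0 ω = x0) with hPcx
  set Pax : ℝ := Pr p (fun ω => XS X A ω = a ∧ X0 ω = x0) with hPax
  set Px : ℝ := Pr p (fun ω => X0 ω = x0) with hPx
  -- rewrite the goal into canonical form
  have e1 : Pr p (fun ω => XS X A ω = a ∧ XS X D ω = d ∧ (X0 ω, XS X C ω) = (x0, cv))
      = Pacdx := Pr_congr p fun ω => by simp only [Prod.mk.injEq]; tauto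
  have e2 : Pr p (fun ω => (X0 ω, XS X C ω) = (x0, cv)) = Pcx :=
    Pr_congr p fun ω => by simp only [Prod.mk.injEq]; tauto
  have e3 : Pr p (fun ω => XS X A ω = a ∧ (X0 ω, XS X C ω) = (x0, cv)) = Pacx :=
    Pr_congr p fun ω => by simp only [Prod.mk.injEq]; tauto
  have e4 : Pr p (fun ω => XS X D ω = d ∧ (X0 ω, XS X C ω) = (x0, cv)) = Pcdx :=
    Pr_congr p fun ω => by simp only [Prod.mk.injEq]; tauto
  rw [e1, e2, e3, e4]
  -- instance of the Markov assumption with T = C ∪ D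
  have hACD : Disjoint A (C ∪ D) := Finset.disjoint_union_right.mpr ⟨hAC, hAD⟩
  have hi0 := hM A (C ∪ D) hACD a (glue cv d) x0
  have hi : Pacdx * Px = Pax * Pcdx := by
    have ee1 : Pr p (fun ω => XS X A ω = a ∧ XS X (C ∪ D) ω = glue cv d ∧ X0 ω = x0)
        = Pacdx := Pr_congr p fun ω => by
      rw [XS_union_glue hCD X cv d ω]; tauto
    have ee2 : Pr p (fun ω => XS X (C ∪ D) ω = glue cv d ∧ X0 ω = x0) = Pcdx :=
      Pr_congr p fun ω => by rw [XS_union_glue hCD X cv d ω]; tauto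
    rw [ee1, ee2] at hi0
    exact hi0
  -- instance with T = C
  have hii0 := hM A C hAC a cv x0
  have hii : Pacx * Px = Pax * Pcx := hii0
  by_cases hPx0 : Px = 0
  · have hle1 : Pacdx = 0 := le_antisymm
      (hPx0 ▸ Pr_mono p hp0 (fun ω h => h.2.2.2)) (Pr_nonneg p hp0 _)
    have hle2 : Pacx = 0 := le_antisymm
      (hPx0 ▸ Pr_mono p hp0 (fun ω h => h.2.2)) (Pr_nonneg p hp0 _)
    rw [hle1, hle2, zero_mul, zero_mul]
  · exact mul_left_cancel₀ hPx0 (by linear_combination Pcx * hi - Pcdx * hii)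

end Markov


/-- under the Markov assumption, for fixed `S ⊂ L`, the set function
`w : 2^S → ℝ, T ↦ I(X_T; X_0 | X_{S^c})` is submodular. -/
theorem statement16 {Ω L 𝒳 β : Type} [Fintype Ω] [Fintype L] [DecidableEq L] [Fintype 𝒳] [Fintype β]
    (p : Ω → ℝ) (hp : IsPMF p) (X : L → Ω → 𝒳) (X0 : Ω → β)
    (hM : ∀ S T : Finset L, Disjoint S T → CondIndep p (XS X S) (XS X T) X0)
    (S : Finset L) (hS : S ⊂ Finset.univ) :
    ∀ U V : Finset L, U ⊆ S → V ⊆ S →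
      cmi p (XS X (U ∪ V)) X0 (XS X Sᶜ) + cmi p (XS X (U ∩ V)) X0 (XS X Sᶜ)
        ≤ cmi p (XS X U) X0 (XS X Sᶜ) + cmi p (XS X V) X0 (XS X Sᶜ) := by
  intro U V hU hV
  set A : Finset L := V \ U with hA
  set D : Finset L := U \ V with hD
  set C : Finset L := (U ∩ V) ∪ Sᶜ with hC
  have hAC : Disjoint A C := by
    rw [Finset.disjoint_left]
    intro x hx hxC
    rw [hA, Finset.mem_sdiff] at hx
    rw [hC, Finset.mem_union, Finset.mem_inter, Finset.mem_compl] at hxC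
    rcases hxC with h | h
    · exact hx.2 h.1
    · exact h (hV hx.1)
  have hAD : Disjoint A D := by
    rw [Finset.disjoint_left]
    intro x hx hxD
    rw [hA, Finset.mem_sdiff] at hx
    rw [hD, Finset.mem_sdiff] at hxD
    exact hx.2 hxD.1
  have hCD : Disjoint C D := by
    rw [Finset.disjoint_left]
    intro x hx hxD
    rw [hC, Finset.mem_union, Finset.mem_inter, Finset.mem_compl] at hx
    rw [hD, Finset.mem_sdiff] at hxD
    rcases hx with h | h
    · exact hxD.2 h.2
    · exact h (hU hxD.1)
  have e1 : (U ∪ V) ∪ Sᶜ = A ∪ (D ∪ C) := by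
    ext x
    simp only [hA, hD, hC, Finset.mem_union, Finset.mem_sdiff, Finset.mem_inter,
      Finset.mem_compl]
    tauto
  have e2 : U ∪ Sᶜ = D ∪ C := by
    ext x
    simp only [hD, hC, Finset.mem_union, Finset.mem_sdiff, Finset.mem_inter, Finset.mem_compl]
    tauto
  have e3 : V ∪ Sᶜ = A ∪ C := by
    ext x
    simp only [hA, hC, Finset.mem_union, Finset.mem_sdiff, Finset.mem_inter, Finset.mem_compl]
    tauto
  have e4 : (U ∩ V) ∪ Sᶜ = C := rfl
  have fact1 : 0 ≤ cmi p (XS X A) (XS X D) (XS X C) := cmi_nonneg p hp _ _ _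
  have fact2 : cmi p (XS X A) (XS X D) (fun ω => (X0 ω, XS X C ω)) = 0 :=
    cmi_eq_zero p hp _ _ _ (key_ci p hp X X0 hM A C D hAC hAD hCD)
  rw [cmi_XS_XS p X A D C] at fact1
  rw [cmi_XS_XS_X0 p X X0 A D C] at fact2
  rw [cmi_XS_X0 p X X0 (U ∪ V) Sᶜ, cmi_XS_X0 p X X0 (U ∩ V) Sᶜ,
    cmi_XS_X0 p X X0 U Sᶜ, cmi_XS_X0 p X X0 V Sᶜ, e1, e2, e3, e4]
  linarith
end
end
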